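/- arXiv:math/0412041 — 3 statements merged into one kernel-verified Lean document; each statement's English description precedes it below -/
import Mathlib

section
/- For n ≥ 1, the Hankel determinant det[r_{i+j-2}]_{1≤i,j≤n} of the large Schröder numbers equals 2^{n(n-1)/2}. -/
open Matrix

/-- A lattice point in the plane. -/
abbrev Pt := ℤ × ℤ

/-- The points visited by a path starting at `p` taking steps `l`. -/
def pts (p : Pt) (l : List Pt) : List Pt := l.scanl (· + ·) p

/-- The endpoint of a path starting at `p` taking steps `l`. -/
def endpt (p : Pt) (l : List Pt) : Pt := l.foldl (· + ·) p

/-- `l` is the step list of a large Schröder path from `p` to `q`: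
steps are U=(1,1), D=(1,-1), L=(2,0) and the path never goes below the x-axis. -/
def IsLargePath (p q : Pt) (l : List Pt) : Prop :=
  (∀ s ∈ l, s = (1, 1) ∨ s = (1, -1) ∨ s = (2, 0)) ∧
  (∀ v ∈ pts p l, 0 ≤ v.2) ∧
  endpt p l = q

/-- A small Schröder path: a large Schröder path with no level step on the x-axis. -/
def IsSmallPath (p q : Pt) (l : List Pt) : Prop :=
  IsLargePath p q l ∧
  ∀ (i : ℕ) (h : i < l.length), l.get ⟨i, h⟩ = (2, 0) → (endpt p (l.take i)).2 ≠ 0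

/-- The `k`-th large Schröder number: the number of large Schröder paths
from `(0,0)` to `(2k,0)`. -/
noncomputable def schR (k : ℕ) : ℕ := Nat.card {l : List Pt // IsLargePath (0, 0) (2 * k, 0) l}

/-- The `k`-th small Schröder number: the number of small Schröder paths
from `(0,0)` to `(2k,0)`. -/
noncomputable def schS (k : ℕ) : ℕ := Nat.card {l : List Pt // IsSmallPath (0, 0) (2 * k, 0) l}

/-- `Π n`: `n`-tuples of pairwise non-intersecting large Schröder paths where the
`i`-th path (1-indexed; here index `i : Fin n` stands for `i+1`) runs from
`(-2(i+1)+1, 0)` to `(2(i+1)-1, 0)`. -/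
def PiSet (n : ℕ) : Set (Fin n → List Pt) :=
  {π | (∀ i : Fin n, IsLargePath (-(2 * (i : ℤ) + 1), 0) (2 * (i : ℤ) + 1, 0) (π i)) ∧
    ∀ i j : Fin n, i ≠ j → ∀ v ∈ pts (-(2 * (i : ℤ) + 1), 0) (π i),
      v ∉ pts (-(2 * (j : ℤ) + 1), 0) (π j)}

/-- `Ω n`: the analogous tuples of small Schröder paths. -/
def OmegaSet (n : ℕ) : Set (Fin n → List Pt) :=
  {ω | (∀ i : Fin n, IsSmallPath (-(2 * (i : ℤ) + 1), 0) (2 * (i : ℤ) + 1, 0) (ω i)) ∧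
    ∀ i j : Fin n, i ≠ j → ∀ v ∈ pts (-(2 * (i : ℤ) + 1), 0) (ω i),
      v ∉ pts (-(2 * (j : ℤ) + 1), 0) (ω j)}

/-- `Π* n`: `n`-tuples `(μ₀,…,μ_{n-1})` of pairwise non-intersecting large Schröder
paths with `μ i` from `(-2i,0)` to `(2i,0)`. -/
def PiStarSet (n : ℕ) : Set (Fin n → List Pt) :=
  {μ | (∀ i : Fin n, IsLargePath (-(2 * (i : ℤ)), 0) (2 * (i : ℤ), 0) (μ i)) ∧
    ∀ i j : Fin n, i ≠ j → ∀ v ∈ pts (-(2 * (i : ℤ)), 0) (μ i),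
      v ∉ pts (-(2 * (j : ℤ)), 0) (μ j)}

/-- `Ω* n`: the analogous tuples of small Schröder paths. -/
def OmegaStarSet (n : ℕ) : Set (Fin n → List Pt) :=
  {μ | (∀ i : Fin n, IsSmallPath (-(2 * (i : ℤ)), 0) (2 * (i : ℤ), 0) (μ i)) ∧
    ∀ i j : Fin n, i ≠ j → ∀ v ∈ pts (-(2 * (i : ℤ)), 0) (μ i),
      v ∉ pts (-(2 * (j : ℤ)), 0) (μ j)}

/-- The unit square with lower-left corner `c` lies in the Aztec diamond `Az(n)`,
i.e. all four of its corners `(x,y)` satisfy `|x| + |y| ≤ n + 1`. -/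
def aztecCell (n : ℕ) (c : Pt) : Prop :=
  |c.1| + |c.2| ≤ (n : ℤ) + 1 ∧ |c.1 + 1| + |c.2| ≤ (n : ℤ) + 1 ∧
  |c.1| + |c.2 + 1| ≤ (n : ℤ) + 1 ∧ |c.1 + 1| + |c.2 + 1| ≤ (n : ℤ) + 1

/-- Two unit squares (given by lower-left corners) are edge-adjacent,
so together they form a 1×2 or 2×1 domino. -/
def adjCell (c d : Pt) : Prop :=
  d = (c.1 + 1, c.2) ∨ d = (c.1 - 1, c.2) ∨ d = (c.1, c.2 + 1) ∨ d = (c.1, c.2 - 1)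

/-- A domino tiling of `Az(n)`, encoded as the involution matching each cell of the
diamond with the other cell of its domino (and fixing everything outside). -/
def IsAztecTiling (n : ℕ) (m : Pt → Pt) : Prop :=
  (∀ c, aztecCell n c → aztecCell n (m c) ∧ adjCell c (m c) ∧ m (m c) = c) ∧
  ∀ c, ¬ aztecCell n c → m c = c

/-- The number of domino tilings of the Aztec diamond of order `n`. -/
noncomputable def aztecTilingCount (n : ℕ) : ℕ := Nat.card {m : Pt → Pt // IsAztecTiling n m}

/-- The map sending `(π₁,…,π_{n-1})` to `(μ₀,…,μ_{n-1})` with `μ₀` the empty path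
at the origin and `μᵢ = U πᵢ D`. -/
def extendStar {n : ℕ} (π : Fin (n - 1) → List Pt) (i : Fin n) : List Pt :=
  if h : (i : ℕ) = 0 then []
  else (1, 1) :: π ⟨(i : ℕ) - 1, by omega⟩ ++ [(1, -1)]

section HankelProof






namespace Hankel

lemma endpt_nil (p : Pt) : endpt p [] = p := rfl
lemma endpt_cons (p a : Pt) (l : List Pt) : endpt p (a :: l) = endpt (p + a) l := rfl
lemma endpt_append (p : Pt) (l1 l2 : List Pt) :
    endpt p (l1 ++ l2) = endpt (endpt p l1) l2 := by
  simp [endpt, List.foldl_append]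
lemma endpt_singleton (p a : Pt) : endpt p [a] = p + a := rfl

lemma pts_nil (p : Pt) : pts p [] = [p] := rfl
lemma pts_cons (p a : Pt) (l : List Pt) : pts p (a :: l) = p :: pts (p + a) l := by
  simp [pts, List.scanl_cons]

lemma self_mem_pts (p : Pt) (l : List Pt) : p ∈ pts p l := by
  cases l <;> simp [pts_nil, pts_cons]

lemma mem_pts {v : Pt} (p : Pt) (l : List Pt) :
    v ∈ pts p l ↔ ∃ n, n ≤ l.length ∧ v = endpt p (l.take n) := by
  induction l generalizing p with
  | nil =>
    simp only [pts_nil, List.mem_singleton, List.length_nil, Nat.le_zero]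
    constructor
    · rintro rfl; exact ⟨0, rfl, rfl⟩
    · rintro ⟨n, rfl, rfl⟩; rfl
  | cons a l ih =>
    rw [pts_cons]
    simp only [List.mem_cons, ih]
    constructor
    · rintro (rfl | ⟨n, hn, rfl⟩)
      · exact ⟨0, by simp, rfl⟩
      · exact ⟨n + 1, by simpa using hn, by simp [endpt_cons]⟩
    · rintro ⟨n, hn, rfl⟩
      cases n with
      | zero => left; rfl
      | succ n => right; exact ⟨n, by simpa using hn, by simp [endpt_cons]⟩

lemma mem_pts_append {v : Pt} (p : Pt) (l1 l2 : List Pt) :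
    v ∈ pts p (l1 ++ l2) ↔ v ∈ pts p l1 ∨ v ∈ pts (endpt p l1) l2 := by
  induction l1 generalizing p with
  | nil =>
    simp only [List.nil_append, pts_nil, List.mem_singleton, endpt_nil]
    constructor
    · intro h; right; exact h
    · rintro (rfl | h)
      · exact self_mem_pts _ _
      · exact h
  | cons a l1 ih =>
    simp only [List.cons_append, pts_cons, List.mem_cons, endpt_cons, ih, or_assoc]

end Hankel




namespace Hankel

inductive SP : Type
  | nil : SP
  | flat : SP → SP
  | up : SP → SP → SP

def sz : SP → ℕ
  | .nil => 0
  | .flat p => sz p + 1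
  | .up p q => sz p + sz q + 1

def tl : SP → List Pt
  | .nil => []
  | .flat p => (2, 0) :: tl p
  | .up p q => (1, 1) :: (tl p ++ (1, -1) :: tl q)

lemma tl_steps (s : SP) : ∀ x ∈ tl s,
    x = ((1 : ℤ), (1 : ℤ)) ∨ x = (1, -1) ∨ x = (2, 0) := by
  induction s with
  | nil => simp [tl]
  | flat p ih =>
    intro x hx
    rcases List.mem_cons.1 hx with rfl | hx
    · tauto
    · exact ih x hx
  | up p q ihp ihq =>
    intro x hx
    rcases List.mem_cons.1 hx with rfl | hx
    · tauto
    rcases List.mem_append.1 hx with hx | hx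
    · exact ihp x hx
    rcases List.mem_cons.1 hx with rfl | hx
    · tauto
    · exact ihq x hx

lemma endpt_tl (s : SP) (p : Pt) : endpt p (tl s) = p + ((2 * sz s : ℤ), 0) := by
  induction s generalizing p with
  | nil => simp [tl, endpt_nil, sz]
  | flat q ih =>
    simp only [tl, endpt_cons, ih, sz]
    ext <;> push_cast <;> simp <;> ring
  | up a b iha ihb =>
    simp only [tl, endpt_cons, endpt_append, iha, ihb, sz]
    ext <;> push_cast <;> simp <;> ring

lemma pts_tl_ge (s : SP) (p : Pt) : ∀ v ∈ pts p (tl s), p.2 ≤ v.2 := by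
  induction s generalizing p with
  | nil => simp [tl, pts_nil]
  | flat q ih =>
    intro v hv
    rw [tl, pts_cons, List.mem_cons] at hv
    rcases hv with rfl | hv
    · exact le_refl _
    · have := ih (p + (2, 0)) v hv
      simp only [Prod.snd_add] at this
      omega
  | up a b iha ihb =>
    intro v hv
    rw [tl, pts_cons, List.mem_cons] at hv
    rcases hv with rfl | hv
    · exact le_refl _
    rw [mem_pts_append] at hv
    rcases hv with hv | hv
    · have := iha (p + (1, 1)) v hv
      simp only [Prod.snd_add] at this
      omega
    rw [endpt_tl, pts_cons, List.mem_cons] at hv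
    rcases hv with rfl | hv
    · simp
    · have := ihb _ v hv
      simp only [Prod.snd_add] at this
      omega

lemma take_tl_ge (s : SP) (n : ℕ) : (0 : ℤ) ≤ (endpt 0 ((tl s).take n)).2 := by
  rcases le_or_gt n (tl s).length with h | h
  · have : endpt 0 ((tl s).take n) ∈ pts (0 : Pt) (tl s) :=
      (mem_pts _ _).2 ⟨n, h, rfl⟩
    exact pts_tl_ge s 0 _ this
  · rw [List.take_of_length_le h.le, endpt_tl]
    simp

end Hankel





namespace Hankel

lemma len_ne (a a' : SP) (b b' : List Pt)
    (h : tl a ++ (1, -1) :: b = tl a' ++ (1, -1) :: b')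
    (hlt : (tl a).length < (tl a').length) : False := by
  have htake : (tl a ++ (1, -1) :: b).take ((tl a).length + 1) = tl a ++ [(1, -1)] := by
    rw [List.take_append]
    simp
  have htake' : (tl a' ++ (1, -1) :: b').take ((tl a).length + 1)
      = (tl a').take ((tl a).length + 1) := by
    rw [List.take_append_of_le_length (by omega)]
  have heq : tl a ++ [(1, -1)] = (tl a').take ((tl a).length + 1) := by
    rw [← htake, h, htake']
  have h1 := take_tl_ge a' ((tl a).length + 1)
  rw [← heq, endpt_append, endpt_singleton] at h1
  have h2 : (endpt 0 (tl a)).2 = 0 := by rw [endpt_tl]; simp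
  simp only [Prod.snd_add] at h1
  omega

lemma tl_inj : ∀ s t : SP, tl s = tl t → s = t := by
  intro s
  induction s with
  | nil =>
    intro t h; cases t <;> simp [tl] at h ⊢
  | flat a ih =>
    intro t h
    cases t with
    | nil => simp [tl] at h
    | flat a' => rw [tl, tl, List.cons.injEq] at h; rw [ih a' h.2]
    | up a' b' => rw [tl, tl, List.cons.injEq] at h; simp at h
  | up a b iha ihb =>
    intro t h
    cases t with
    | nil => simp [tl] at h
    | flat a' =>
      rw [tl, tl, List.cons.injEq] at h
      exact absurd h.1 (by decide)
    | up a' b' =>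
      rw [tl, tl, List.cons.injEq] at h
      have h2 := h.2
      have hlen : (tl a).length = (tl a').length := by
        rcases lt_trichotomy (tl a).length (tl a').length with hl | hl | hl
        · exact absurd (len_ne a a' _ _ h2 hl) not_false
        · exact hl
        · exact absurd (len_ne a' a _ _ h2.symm hl) not_false
      obtain ⟨ha, hb⟩ := List.append_inj h2 hlen
      rw [List.cons.injEq] at hb
      rw [iha a' ha, ihb b' hb.2]

end Hankel






namespace Hankel

lemma parse : ∀ (N : ℕ) (l : List Pt) (p : Pt), l.length ≤ N →
    (∀ x ∈ l, x = ((1 : ℤ), (1 : ℤ)) ∨ x = (1, -1) ∨ x = (2, 0)) →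
    (∀ v ∈ pts p l, p.2 ≤ v.2) →
    (endpt p l).2 = p.2 →
    ∃ s : SP, tl s = l ∧ (endpt p l).1 = p.1 + 2 * sz s := by
  intro N
  induction N with
  | zero =>
    intro l p hlen _ _ _
    have : l = [] := List.eq_nil_of_length_eq_zero (by omega)
    subst this
    exact ⟨.nil, rfl, by simp [endpt_nil, sz]⟩
  | succ N ih =>
    intro l p hlen hsteps hge hend
    cases l with
    | nil => exact ⟨.nil, rfl, by simp [endpt_nil, sz]⟩
    | cons a t =>
      simp only [List.length_cons] at hlen
      rcases hsteps a List.mem_cons_self with rfl | rfl | rfl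
      · -- up step
        set q : Pt := p + (1, 1) with hq
        have hq2 : q.2 = p.2 + 1 := by simp [hq]
        have hendq2 : (endpt q t).2 = p.2 := hend
        have hmempts : ∀ v ∈ pts q t, v ∈ pts p ((1, 1) :: t) := by
          intro v hv; rw [pts_cons]; exact List.mem_cons_of_mem _ hv
        have hgeq : ∀ m, m ≤ t.length → p.2 ≤ (endpt q (t.take m)).2 := by
          intro m hm
          exact hge _ (hmempts _ ((mem_pts _ _).2 ⟨m, hm, rfl⟩))
        have hex : ∃ n, (endpt q (t.take n)).2 = p.2 :=
          ⟨t.length, by rw [List.take_length]; exact hend⟩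
        set n0 := Nat.find hex with hn0def
        have hn0 : (endpt q (t.take n0)).2 = p.2 := Nat.find_spec hex
        have hlen0 : n0 ≤ t.length := Nat.find_min' hex (by rw [List.take_length]; exact hend)
        have hmin : ∀ m, m < n0 → (endpt q (t.take m)).2 ≠ p.2 :=
          fun m hm => Nat.find_min hex hm
        have hpos : n0 ≠ 0 := by
          intro h0
          rw [h0] at hn0
          simp [endpt_nil] at hn0
          omega
        have hge1 : ∀ m, m < n0 → p.2 + 1 ≤ (endpt q (t.take m)).2 := by
          intro m hm
          have h1 := hgeq m (le_trans hm.le hlen0)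
          have h2 := hmin m hm
          omega
        set n1 := n0 - 1 with hn1def
        have hn1lt : n1 < t.length := by omega
        have htake : t.take n0 = t.take n1 ++ [t[n1]] := by
          rw [List.take_concat_get' t n1 hn1lt]
          congr 1
          omega
        have hstepD : t[n1] = ((1 : ℤ), (-1 : ℤ)) := by
          have hmem := List.getElem_mem hn1lt
          have h1 : (endpt q (t.take n0)).2 = (endpt q (t.take n1)).2 + (t[n1]).2 := by
            rw [htake, endpt_append, endpt_singleton]; simp
          have h2 := hge1 n1 (by omega)
          rcases hsteps _ (List.mem_cons_of_mem _ hmem) with h | h | h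
          · exfalso; rw [h] at h1; simp at h1; omega
          · exact h
          · exfalso; rw [h] at h1; simp at h1; omega
        have hA2 : (endpt q (t.take n1)).2 = p.2 + 1 := by
          have h1 : (endpt q (t.take n0)).2 = (endpt q (t.take n1)).2 + (t[n1]).2 := by
            rw [htake, endpt_append, endpt_singleton]; simp
          rw [hstepD] at h1
          simp at h1
          omega
        set A := t.take n1 with hAdef
        set B := t.drop n0 with hBdef
        have hsplit : t = A ++ (1, -1) :: B := by
          conv_lhs => rw [← List.take_append_drop n1 t]
          congr 1
          rw [List.drop_eq_getElem_cons hn1lt, hstepD]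
          congr 1
          · congr 1
            omega
        have hlenA : A.length = n1 := by
          rw [hAdef, List.length_take]; omega
        -- apply ih to A
        obtain ⟨sa, hsa, hxa⟩ := ih A q (by rw [hlenA]; omega)
          (fun x hx => hsteps x (List.mem_cons_of_mem _ (List.take_subset _ _ hx)))
          (by
            intro v hv
            rw [mem_pts] at hv
            obtain ⟨m, hm, rfl⟩ := hv
            rw [hlenA] at hm
            have : A.take m = t.take m := by
              rw [hAdef, List.take_take]
              congr 1
              omega
            rw [this, hq2]
            exact hge1 m (by omega))
          (by rw [hA2, hq2])
        -- apply ih to B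
        set r := endpt q (t.take n0) with hrdef
        have hr2 : r.2 = p.2 := hn0
        have hendB : endpt r B = endpt q t := by
          rw [hrdef, hBdef, ← endpt_append, List.take_append_drop]
        have hendq : endpt p ((1, 1) :: t) = endpt q t := by rw [endpt_cons]
        obtain ⟨sb, hsb, hxb⟩ := ih B r (by rw [hBdef, List.length_drop]; omega)
          (fun x hx => hsteps x (List.mem_cons_of_mem _ (List.drop_subset _ _ hx)))
          (by
            intro v hv
            rw [mem_pts] at hv
            obtain ⟨m, hm, rfl⟩ := hv
            have hBm : endpt r (B.take m) = endpt q (t.take (n0 + m)) := by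
              rw [hrdef, hBdef, ← endpt_append, ← List.take_add]
            rw [hBm, hr2]
            rcases le_or_gt (n0 + m) t.length with h | h
            · exact hgeq _ h
            · rw [List.take_of_length_le h.le]
              omega)
          (by rw [hendB, hr2]; exact hend)
        refine ⟨.up sa sb, ?_, ?_⟩
        · rw [tl, hsa, hsb, ← hsplit]
        · have hr1 : r.1 = q.1 + 2 * sz sa + 1 := by
            rw [hrdef, htake, endpt_append, endpt_singleton, hstepD]
            simp only [Prod.fst_add]
            omega
          rw [hendq, ← hendB, hxb, hr1]
          have hq1 : q.1 = p.1 + 1 := by simp [hq]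
          rw [hq1]
          simp only [sz]
          push_cast
          ring
      · -- down step: impossible
        exfalso
        have hv := hge (p + (1, -1)) (by rw [pts_cons]; exact List.mem_cons_of_mem _ (self_mem_pts _ _))
        simp only [Prod.snd_add] at hv
        omega
      · -- level step
        obtain ⟨s, hs, hx⟩ := ih t (p + (2, 0)) (by omega)
          (fun x hx => hsteps x (List.mem_cons_of_mem _ hx))
          (by
            intro v hv
            have := hge v (by rw [pts_cons]; exact List.mem_cons_of_mem _ hv)
            simp only [Prod.snd_add] at this ⊢
            omega)
          (by
            rw [← endpt_cons]
            simp only [Prod.snd_add]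
            omega)
        refine ⟨.flat s, ?_, ?_⟩
        · rw [tl, hs]
        · rw [endpt_cons, hx]
          simp only [Prod.fst_add, sz]
          push_cast
          ring

end Hankel











namespace Hankel

lemma tl_isLargePath (s : SP) : IsLargePath (0, 0) ((2 * sz s : ℤ), 0) (tl s) := by
  refine ⟨tl_steps s, ?_, ?_⟩
  · intro v hv
    exact pts_tl_ge s (0, 0) v hv
  · rw [endpt_tl]
    ext <;> simp

def T (k : ℕ) : Type := {s : SP // sz s = k}

lemma card_T (k : ℕ) : Nat.card (T k) = schR k := by
  refine Nat.card_congr (Equiv.ofBijective (fun s : T k =>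
    (⟨tl s.1, by have h := tl_isLargePath s.1; rw [s.2] at h; exact h⟩ :
      {l : List Pt // IsLargePath (0, 0) (2 * k, 0) l})) ⟨?_, ?_⟩)
  · intro x y h
    rw [Subtype.mk.injEq] at h
    exact Subtype.ext (tl_inj _ _ h)
  · rintro ⟨l, hsteps, hge, hend⟩
    obtain ⟨s, hs, hx⟩ := parse l.length l (0, 0) le_rfl hsteps hge (by rw [hend])
    have hszs : sz s = k := by
      rw [hend] at hx
      simp only at hx
      omega
    exact ⟨⟨s, hszs⟩, Subtype.ext hs⟩

def g (k : ℕ) : (T k ⊕ (Σ _i : Fin (k + 1), T _i × T (k - _i))) → T (k + 1)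
  | .inl ⟨s, h⟩ => ⟨.flat s, by simp [sz, h]⟩
  | .inr ⟨i, ⟨a, ha⟩, ⟨b, hb⟩⟩ => ⟨.up a b, by have := i.isLt; simp [sz, ha, hb]; omega⟩

lemma g_bij (k : ℕ) : Function.Bijective (g k) := by
  constructor
  · rintro (⟨a, ha⟩ | ⟨i, ⟨a, ha⟩, ⟨b, hb⟩⟩) (⟨a', ha'⟩ | ⟨i', ⟨a', ha'⟩, ⟨b', hb'⟩⟩) h <;>
      simp only [g, Subtype.mk.injEq] at h
    · cases h; rfl
    · exact absurd h (by intro hh; cases hh)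
    · exact absurd h (by intro hh; cases hh)
    · obtain ⟨rfl, rfl⟩ : a = a' ∧ b = b' := by cases h; exact ⟨rfl, rfl⟩
      have hii : i = i' := Fin.ext (by omega)
      subst hii
      rfl
  · rintro ⟨s, hs⟩
    cases s with
    | nil => exact absurd hs (by simp [sz])
    | flat a => exact ⟨.inl ⟨a, by simp [sz] at hs; omega⟩, rfl⟩
    | up a b =>
      have h1 : sz a + sz b + 1 = k + 1 := hs
      refine ⟨.inr ⟨⟨sz a, by omega⟩, ⟨a, rfl⟩, ⟨b, by simp; omega⟩⟩, rfl⟩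

lemma finite_T : ∀ k, Finite (T k) := by
  intro k
  induction k using Nat.strong_induction_on with
  | _ k ih =>
    match k with
    | 0 =>
      refine Finite.of_surjective (fun _ : PUnit => (⟨.nil, rfl⟩ : T 0)) ?_
      rintro ⟨s, hs⟩
      cases s with
      | nil => exact ⟨PUnit.unit, rfl⟩
      | flat a => exact absurd hs (by simp [sz])
      | up a b => exact absurd hs (by simp [sz])
    | k + 1 =>
      haveI : ∀ i : Fin (k + 1), Finite (T i) := fun i => ih i (by omega)
      haveI : ∀ i : Fin (k + 1), Finite (T (k - i)) := fun i => ih (k - i) (by omega)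
      haveI : Finite (T k) := ih k (by omega)
      exact Finite.of_surjective (g k) (g_bij k).2

noncomputable instance (k : ℕ) : Fintype (T k) := @Fintype.ofFinite _ (finite_T k)

lemma card_T_succ (k : ℕ) :
    Nat.card (T (k + 1)) = Nat.card (T k) +
      ∑ i ∈ Finset.range (k + 1), Nat.card (T i) * Nat.card (T (k - i)) := by
  have h := Nat.card_eq_of_bijective (g k) (g_bij k)
  rw [← h]
  simp only [Nat.card_eq_fintype_card]
  rw [Fintype.card_sum, Fintype.card_sigma]
  congr 1
  rw [← Fin.sum_univ_eq_sum_range (fun i => Fintype.card (T i) * Fintype.card (T (k - i)))]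
  exact Finset.sum_congr rfl fun i _ => Fintype.card_prod _ _

lemma schR_zero : schR 0 = 1 := by
  rw [← card_T 0]
  haveI : Unique (T 0) := {
    default := ⟨.nil, rfl⟩
    uniq := by
      rintro ⟨s, hs⟩
      cases s with
      | nil => rfl
      | flat a => exact absurd hs (by simp [sz])
      | up a b => exact absurd hs (by simp [sz]) }
  exact Nat.card_unique

lemma schR_succ (k : ℕ) :
    schR (k + 1) = schR k + ∑ i ∈ Finset.range (k + 1), schR i * schR (k - i) := by
  rw [← card_T, ← card_T, card_T_succ]
  congr 1
  exact Finset.sum_congr rfl fun i _ => by rw [card_T, card_T]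

end Hankel








namespace Hankel

open Finset

def c : ℕ → ℕ → ℕ
  | 0, 0 => 1
  | 0, _ + 1 => 0
  | m + 1, 0 => 2 * c m 0 + 2 * c m 1
  | m + 1, k + 1 => c m k + 3 * c m (k + 1) + 2 * c m (k + 2)

lemma c_zero_succ (k : ℕ) : c 0 (k + 1) = 0 := rfl
lemma c_succ_zero (m : ℕ) : c (m + 1) 0 = 2 * c m 0 + 2 * c m 1 := rfl
lemma c_succ_succ (m k : ℕ) : c (m + 1) (k + 1) = c m k + 3 * c m (k + 1) + 2 * c m (k + 2) := rfl

lemma c_eq_zero : ∀ m k, m < k → c m k = 0 := by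
  intro m
  induction m with
  | zero => intro k hk; match k, hk with | k + 1, _ => rfl
  | succ m ih =>
    intro k hk
    match k, hk with
    | k + 1, hk =>
      rw [c_succ_succ, ih k (by omega), ih (k + 1) (by omega), ih (k + 2) (by omega)]

lemma c_diag : ∀ m, c m m = 1 := by
  intro m
  induction m with
  | zero => rfl
  | succ m ih =>
    rw [c_succ_succ, ih, c_eq_zero m (m + 1) (by omega), c_eq_zero m (m + 2) (by omega)]

/-- key convolution identity (II) -/
lemma c_conv : ∀ m k, 2 * c m (k + 1) = ∑ i ∈ range m, c (i + 1) 0 * c (m - 1 - i) k := by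
  intro m
  induction m with
  | zero => intro k; simp [c_zero_succ]
  | succ m ih =>
    intro k
    rw [Finset.sum_range_succ]
    have hlast : c (m + 1) 0 * c (m - 1 - m) k = c (m + 1) 0 * c 0 k := by
      congr 2
      omega
    have hre : ∀ i ∈ range m, c (i + 1) 0 * c (m - i) k
        = c (i + 1) 0 * c ((m - 1 - i) + 1) k := by
      intro i hi
      rw [Finset.mem_range] at hi
      congr 2
      omega
    have hbody : ∑ i ∈ range m, c (i + 1) 0 * c (m + 1 - 1 - i) k
        = ∑ i ∈ range m, c (i + 1) 0 * c ((m - 1 - i) + 1) k := by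
      refine Finset.sum_congr rfl fun i hi => ?_
      rw [Finset.mem_range] at hi
      congr 2
      omega
    rw [hbody]
    have hmm : m + 1 - 1 - m = 0 := by omega
    rw [hmm]
    cases k with
    | zero =>
      -- target: 2 * c (m+1) 1 = ∑ i<m, c(i+1) 0 * c((m-1-i)+1) 0 + c (m+1) 0 * c 0 0
      have hcz : ∀ a b : ℕ, c a 0 * c (b + 1) 0
          = 2 * (c a 0 * c b 0) + 2 * (c a 0 * c b 1) := by
        intro a b
        rw [c_succ_zero]
        ring
      have hexp : ∀ i ∈ range m, c (i + 1) 0 * c ((m - 1 - i) + 1) 0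
          = 2 * (c (i + 1) 0 * c (m - 1 - i) 0) + 2 * (c (i + 1) 0 * c (m - 1 - i) 1) := by
        intro i _
        exact hcz (i + 1) (m - 1 - i)
      rw [Finset.sum_congr rfl hexp, Finset.sum_add_distrib, ← Finset.mul_sum, ← Finset.mul_sum,
        ← ih 0, ← ih 1, c_succ_succ, c_succ_zero]
      simp [c]
      ring
    | succ k =>
      have hexp : ∀ i ∈ range m, c (i + 1) 0 * c ((m - 1 - i) + 1) (k + 1)
          = c (i + 1) 0 * c (m - 1 - i) k + 3 * (c (i + 1) 0 * c (m - 1 - i) (k + 1))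
            + 2 * (c (i + 1) 0 * c (m - 1 - i) (k + 2)) := by
        intro i _
        rw [c_succ_succ]
        ring
      rw [Finset.sum_congr rfl hexp, Finset.sum_add_distrib, Finset.sum_add_distrib,
        ← Finset.mul_sum, ← Finset.mul_sum, ← ih k, ← ih (k + 1), ← ih (k + 2)]
      rw [c_zero_succ, c_succ_succ]
      ring

/-- identity (I): the Schröder recurrence for c · 0 -/
lemma c_rec (m : ℕ) : c (m + 1) 0 = c m 0 + ∑ i ∈ range (m + 1), c i 0 * c (m - i) 0 := by
  rw [Finset.sum_range_succ']
  have h1 : ∑ i ∈ range m, c (i + 1) 0 * c (m - (i + 1)) 0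
      = ∑ i ∈ range m, c (i + 1) 0 * c (m - 1 - i) 0 := by
    refine Finset.sum_congr rfl fun i hi => ?_
    rw [Finset.mem_range] at hi
    congr 2
    omega
  rw [h1, ← c_conv m 0, c_succ_zero]
  simp [c]
  ring

lemma schR_eq_c : ∀ k, schR k = c k 0 := by
  intro k
  induction k using Nat.strong_induction_on with
  | _ k ih =>
    match k with
    | 0 => rw [schR_zero]; rfl
    | k + 1 =>
      rw [schR_succ, c_rec, ih k (by omega)]
      congr 1
      refine Finset.sum_congr rfl fun i hi => ?_
      rw [Finset.mem_range] at hi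
      rw [ih i (by omega), ih (k - i) (by omega)]

end Hankel









namespace Hankel

open Finset

lemma sum_shift (v : ℕ → ℤ) (N : ℕ) (hvN : v N = 0) :
    ∑ k ∈ range N, v (k + 1) = ∑ k ∈ range N, v k - v 0 := by
  have h1 := Finset.sum_range_succ' v N
  have h2 := Finset.sum_range_succ v N
  rw [hvN, add_zero] at h2
  linarith

lemma helperZ (i j N : ℕ) (hi : i ≤ N) :
    ∑ k ∈ range (N + 1), (2 : ℤ) ^ k * c (i + 1) k * c j k
      = (∑ k ∈ range N, (2 : ℤ) ^ (k + 1) * c i k * c j (k + 1))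
        + (∑ k ∈ range N, (2 : ℤ) ^ (k + 1) * c j k * c i (k + 1))
        + 3 * (∑ k ∈ range N, (2 : ℤ) ^ (k + 1) * c i (k + 1) * c j (k + 1))
        + 2 * ((c i 0 : ℤ) * c j 0) := by
  rw [Finset.sum_range_succ']
  have hsummand : ∀ k ∈ range N, (2 : ℤ) ^ (k + 1) * c (i + 1) (k + 1) * c j (k + 1)
      = 2 ^ (k + 1) * c i k * c j (k + 1) + 3 * (2 ^ (k + 1) * c i (k + 1) * c j (k + 1))
        + 2 ^ (k + 1 + 1) * c j (k + 1) * c i (k + 1 + 1) := by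
    intro k _
    rw [c_succ_succ]
    push_cast
    ring
  rw [Finset.sum_congr rfl hsummand]
  rw [Finset.sum_add_distrib, Finset.sum_add_distrib]
  have hshift := sum_shift (fun k => (2 : ℤ) ^ (k + 1) * c j k * c i (k + 1)) N
      (by simp [c_eq_zero i (N + 1) (by omega)])
  rw [hshift]
  have h0 : ((c (i + 1) 0 : ℤ)) = 2 * c i 0 + 2 * c i 1 := by
    rw [c_succ_zero]; push_cast; ring
  simp only [pow_zero, one_mul]
  rw [h0, ← Finset.mul_sum]
  push_cast
  ring

lemma transfer (i j N : ℕ) (hi : i ≤ N) (hj : j ≤ N) :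
    ∑ k ∈ range (N + 1), (2 : ℤ) ^ k * c (i + 1) k * c j k
      = ∑ k ∈ range (N + 1), (2 : ℤ) ^ k * c i k * c (j + 1) k := by
  rw [helperZ i j N hi]
  have h2 := helperZ j i N hj
  have hcomm : ∑ k ∈ range (N + 1), (2 : ℤ) ^ k * c i k * c (j + 1) k
      = ∑ k ∈ range (N + 1), (2 : ℤ) ^ k * c (j + 1) k * c i k :=
    Finset.sum_congr rfl fun k _ => by ring
  rw [hcomm, h2]
  have hM : ∑ k ∈ range N, (2 : ℤ) ^ (k + 1) * c j (k + 1) * c i (k + 1)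
      = ∑ k ∈ range N, (2 : ℤ) ^ (k + 1) * c i (k + 1) * c j (k + 1) :=
    Finset.sum_congr rfl fun k _ => by ring
  rw [hM]
  ring

lemma sum_cut (m : ℕ) : ∀ j ≤ m, ∑ k ∈ range (m + 2), (2 : ℤ) ^ k * c (m - j) k * c j k
    = (c m 0 : ℤ) := by
  intro j
  induction j with
  | zero =>
    intro _
    rw [Finset.sum_eq_single 0]
    · simp [show c 0 0 = 1 from rfl]
    · intro b _ hb
      match b, hb with
      | b + 1, _ => rw [c_zero_succ]; push_cast; ring
    · intro h
      exact absurd (Finset.mem_range.2 (by omega)) h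
  | succ j ihj =>
    intro hj
    have h1 : m - j = (m - (j + 1)) + 1 := by omega
    have ht := transfer (m - (j + 1)) j (m + 1) (by omega) (by omega)
    rw [← h1] at ht
    have ihj' := ihj (by omega)
    rw [show m + 1 + 1 = m + 2 from rfl] at ht
    rw [← ht]
    exact ihj'

lemma c_hankel (i j n : ℕ) (hi : i < n) (hj : j < n) :
    ((c (i + j) 0 : ℤ)) = ∑ k ∈ range n, (2 : ℤ) ^ k * c i k * c j k := by
  have h := sum_cut (i + j) j (by omega)
  rw [show i + j - j = i from by omega] at h
  have key : ∀ M : ℕ, i < M →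
      ∑ k ∈ range (i + 1), (2 : ℤ) ^ k * c i k * c j k
        = ∑ k ∈ range M, (2 : ℤ) ^ k * c i k * c j k := by
    intro M hM
    refine Finset.sum_subset ?_ ?_
    · intro k hk
      rw [Finset.mem_range] at hk ⊢
      omega
    · intro k _ hnk
      rw [Finset.mem_range] at hnk
      rw [c_eq_zero i k (by omega)]
      push_cast
      ring
  rw [← h, ← key (i + j + 2) (by omega), key n hi]

end Hankel












namespace Hankel

theorem hankel_main (n : ℕ) (_hn : 1 ≤ n) :
    (Matrix.of fun i j : Fin n => (schR ((i : ℕ) + (j : ℕ)) : ℤ)).det =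
      2 ^ (n * (n - 1) / 2) := by
  set L : Matrix (Fin n) (Fin n) ℤ := Matrix.of fun i k : Fin n => ((c (i : ℕ) (k : ℕ) : ℤ))
    with hL
  set D : Matrix (Fin n) (Fin n) ℤ := Matrix.diagonal fun k : Fin n => (2 : ℤ) ^ (k : ℕ)
    with hD
  have hM : (Matrix.of fun i j : Fin n => (schR ((i : ℕ) + (j : ℕ)) : ℤ)) = L * D * Lᵀ := by
    ext i j
    have h1 : (L * D * Lᵀ) i j = ∑ k : Fin n, (c (i : ℕ) (k : ℕ) : ℤ) * 2 ^ (k : ℕ)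
        * (c (j : ℕ) (k : ℕ) : ℤ) := by
      rw [Matrix.mul_apply]
      refine Finset.sum_congr rfl fun k _ => ?_
      rw [Matrix.mul_diagonal, Matrix.transpose_apply]
      simp [hL, hD]
    rw [Matrix.of_apply, h1, schR_eq_c]
    rw [Fin.sum_univ_eq_sum_range (fun k : ℕ => (c (i : ℕ) k : ℤ) * 2 ^ k * (c (j : ℕ) k : ℤ)) n]
    rw [c_hankel (i : ℕ) (j : ℕ) n i.isLt j.isLt]
    exact Finset.sum_congr rfl fun k _ => by ring
  rw [hM, Matrix.det_mul, Matrix.det_mul, Matrix.det_transpose]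
  have hLdet : L.det = 1 := by
    rw [Matrix.det_of_lowerTriangular L]
    · refine Finset.prod_eq_one fun i _ => ?_
      simp [hL, c_diag]
    · intro i k hik
      simp only [OrderDual.toDual_lt_toDual] at hik
      simp only [hL, Matrix.of_apply]
      rw [c_eq_zero _ _ (by exact_mod_cast hik)]
      simp
  have hDdet : D.det = 2 ^ (n * (n - 1) / 2) := by
    rw [hD, Matrix.det_diagonal, Finset.prod_pow_eq_pow_sum]
    congr 1
    rw [Fin.sum_univ_eq_sum_range (fun k => k) n]
    have h2 := Finset.sum_range_id_mul_two n
    omega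
  rw [hLdet, hDdet]
  ring

end Hankel

end HankelProof

/-- For `n ≥ 1`, `det [r_{i+j-2}] = 2^{n(n-1)/2}`. -/
theorem hankel_large_det_shift (n : ℕ) (hn : 1 ≤ n) :
    (Matrix.of fun i j : Fin n => (schR ((i : ℕ) + (j : ℕ)) : ℤ)).det =
      2 ^ (n * (n - 1) / 2) := Hankel.hankel_main n hn
end

section
/- For n ≥ 1, det(H_n^{(0)}) = det(G_n^{(0)}), i.e., the shifted-by-zero Hankel determinants of the large and small Schröder numbers coincide. -/
open Matrix

open Finset


def ww (p h : ℕ) : ℕ := if h % 2 = p then 2 else 1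

def aa : ℕ → ℕ → ℕ → ℕ
| _, 0, h => if h = 0 then 1 else 0
| p, t+1, 0 => ww p 1 * aa p t 1
| p, t+1, h+1 => aa p t h + ww p (h+2) * aa p t (h+2)

def bb : ℕ → ℕ → ℕ → ℕ
| _, 0, h => if h = 0 then 1 else 0
| p, t+1, 0 => bb p t 1
| p, t+1, g+1 => bb p t (g+2) + ww p (g+1) * bb p t g

lemma ww_mul (p t : ℕ) (hp : p ≤ 1) : ww p (t+1) * ww p (t+2) = 2 := by
  unfold ww; split <;> split <;> omega

lemma ww_succ (p h : ℕ) (hp : p ≤ 1) : ww p (h+1) = ww (1-p) h := by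
  unfold ww; split <;> split <;> omega

lemma aa_eq_zero (p : ℕ) : ∀ t h, t < h → aa p t h = 0 := by
  intro t
  induction t with
  | zero => intro h hh; simp [aa]; omega
  | succ t ih =>
    intro h hh
    match h, hh with
    | g+1, hh => simp [aa, ih g (by omega), ih (g+2) (by omega)]

lemma aa_parity (p : ℕ) : ∀ t h, (t + h) % 2 = 1 → aa p t h = 0 := by
  intro t
  induction t with
  | zero => intro h hh; simp [aa]; omega
  | succ t ih =>
    intro h hh
    match h with
    | 0 => simp [aa, ih 1 (by omega)]
    | g+1 => simp [aa, ih g (by omega), ih (g+2) (by omega)]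

lemma aa_diag (p : ℕ) : ∀ t, aa p t t = 1 := by
  intro t
  induction t with
  | zero => simp [aa]
  | succ t ih => simp [aa, ih, aa_eq_zero p t (t+2) (by omega)]

lemma bb_eq_zero (p : ℕ) : ∀ t h, t < h → bb p t h = 0 := by
  intro t
  induction t with
  | zero => intro h hh; simp [bb]; omega
  | succ t ih =>
    intro h hh
    match h, hh with
    | g+1, hh => simp [bb, ih (g+2) (by omega), ih g (by omega)]

lemma bb_diag_step (p t : ℕ) : bb p (t+1) (t+1) = ww p (t+1) * bb p t t := by
  simp [bb, bb_eq_zero p t (t+2) (by omega)]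

lemma bb_diag_eq : ∀ j, bb 1 (2*j) (2*j) = bb 0 (2*j) (2*j) := by
  intro j
  induction j with
  | zero => simp [bb]
  | succ j ih =>
    have e : ∀ p : ℕ, p ≤ 1 → bb p (2*(j+1)) (2*(j+1)) = 2 * bb p (2*j) (2*j) := by
      intro p hp
      have h1 : 2*(j+1) = (2*j+1)+1 := by omega
      rw [h1, bb_diag_step, show (2*j+1 : ℕ) = (2*j)+1 from rfl, bb_diag_step,
        ← mul_assoc, mul_comm (ww p (2*j+1+1)) (ww p (2*j+1)),
        show (2*j+1+1 : ℕ) = (2*j)+2 from rfl, ww_mul p (2*j) hp]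
    rw [e 1 (by norm_num), e 0 (by norm_num), ih]

lemma transfer (p t u N' : ℕ) (hN : t + u + 5 ≤ 2*(N'+1)) :
    ∑ h ∈ range (N'+1), aa p t h * bb p (u+1) h
      = ∑ h ∈ range (N'+1), aa p (t+1) h * bb p u h := by
  have b1 : aa p t N' * bb p u (N'+1) = 0 := by
    rcases lt_or_ge t N' with h | h
    · rw [aa_eq_zero p t N' h, zero_mul]
    · rw [bb_eq_zero p u (N'+1) (by omega), mul_zero]
  have b2 : ww p (N'+1) * aa p t (N'+1) * bb p u N' = 0 := by
    rcases lt_or_ge t (N'+1) with h | h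
    · rw [aa_eq_zero p t (N'+1) h]; ring
    · rw [bb_eq_zero p u N' (by omega)]; ring
  have hF : ∑ x ∈ range N', aa p t (x+1) * bb p u (x+2) + aa p t 0 * bb p u 1
      = ∑ x ∈ range N', aa p t x * bb p u (x+1) := by
    have e1 := Finset.sum_range_succ' (fun x => aa p t x * bb p u (x+1)) N'
    have e2 := Finset.sum_range_succ (fun x => aa p t x * bb p u (x+1)) N'
    rw [e2, b1, add_zero] at e1
    simpa using e1.symm
  have hG : ∑ x ∈ range N', ww p (x+1) * aa p t (x+1) * bb p u x
      = ∑ x ∈ range N', ww p (x+2) * aa p t (x+2) * bb p u (x+1)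
        + ww p 1 * aa p t 1 * bb p u 0 := by
    have e1 := Finset.sum_range_succ' (fun x => ww p (x+1) * aa p t (x+1) * bb p u x) N'
    have e2 := Finset.sum_range_succ (fun x => ww p (x+1) * aa p t (x+1) * bb p u x) N'
    rw [e2, b2, add_zero] at e1
    simpa using e1
  rw [Finset.sum_range_succ' (fun h => aa p t h * bb p (u+1) h) N',
      Finset.sum_range_succ' (fun h => aa p (t+1) h * bb p u h) N']
  simp only [aa, bb]
  calc ∑ x ∈ range N', aa p t (x+1) * (bb p u (x+2) + ww p (x+1) * bb p u x)
        + aa p t 0 * bb p u 1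
      = (∑ x ∈ range N', aa p t (x+1) * bb p u (x+2) + aa p t 0 * bb p u 1)
        + ∑ x ∈ range N', ww p (x+1) * aa p t (x+1) * bb p u x := by
        simp only [mul_add, Finset.sum_add_distrib]
        rw [Finset.sum_congr rfl (fun x _ => by ring : ∀ x ∈ range N',
          aa p t (x+1) * (ww p (x+1) * bb p u x) = ww p (x+1) * aa p t (x+1) * bb p u x)]
        ring
    _ = ∑ x ∈ range N', aa p t x * bb p u (x+1)
        + (∑ x ∈ range N', ww p (x+2) * aa p t (x+2) * bb p u (x+1)
           + ww p 1 * aa p t 1 * bb p u 0) := by rw [hF, hG]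
    _ = ∑ x ∈ range N', (aa p t x + ww p (x+2) * aa p t (x+2)) * bb p u (x+1)
        + ww p 1 * aa p t 1 * bb p u 0 := by
        simp only [add_mul, Finset.sum_add_distrib]
        rw [Finset.sum_congr rfl (fun x _ => by ring : ∀ x ∈ range N',
          ww p (x+2) * aa p t (x+2) * bb p u (x+1)
            = ww p (x+2) * aa p t (x+2) * bb p u (x+1))]
        ring
lemma split (p : ℕ) : ∀ u t N, t + u + 4 ≤ 2*N →
    ∑ h ∈ range N, aa p t h * bb p u h = aa p (t+u) 0 := by
  intro u
  induction u with
  | zero =>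
    intro t N hN
    have : ∀ h ∈ range N, aa p t h * bb p 0 h = if h = 0 then aa p t 0 else 0 := by
      intro h _
      by_cases hh : h = 0 <;> simp [bb, hh]
    rw [Finset.sum_congr rfl this, Finset.sum_ite_eq' (range N) 0 (fun _ => aa p t 0)]
    simp [show (0:ℕ) ∈ range N from mem_range.mpr (by omega)]
  | succ u ih =>
    intro t N hN
    obtain ⟨N', rfl⟩ : ∃ N', N = N' + 1 := ⟨N - 1, by omega⟩
    rw [transfer p t u N' (by omega), ih (t+1) (N'+1) (by omega)]
    congr 1
    omega

lemma LV (p : ℕ) (hp : p ≤ 1) : ∀ t h, aa p t (h+1)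
    = ∑ u ∈ range t, aa p u 0 * aa (1-p) (t-1-u) h := by
  intro t
  induction t with
  | zero => intro h; simp [aa]
  | succ t ih =>
    intro h
    rw [Finset.sum_range_succ]
    have key : ∀ u ∈ range t, aa p u 0 * aa (1-p) (t+1-1-u) h
        = aa p u 0 * aa (1-p) ((t-1-u)+1) h := by
      intro u hu
      rw [mem_range] at hu
      congr 2
      omega
    rw [Finset.sum_congr rfl key]
    match h with
    | 0 =>
      simp only [aa]
      have e : ∑ x ∈ range t, aa p x 0 * (ww (1-p) 1 * aa (1-p) (t-1-x) 1)
          = ww (1-p) 1 * ∑ x ∈ range t, aa p x 0 * aa (1-p) (t-1-x) 1 := by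
        rw [Finset.mul_sum]; exact Finset.sum_congr rfl fun x _ => by ring
      rw [e, ← ih 1]
      have hw : ww p (0+2) = ww (1-p) 1 := ww_succ p 1 hp
      rw [hw, show t+1-1-t = 0 from by omega]
      simp [aa]
      ring
    | g+1 =>
      simp only [aa]
      have e : ∑ x ∈ range t, aa p x 0 * (aa (1-p) (t-1-x) g
            + ww (1-p) (g+2) * aa (1-p) (t-1-x) (g+2))
          = (∑ x ∈ range t, aa p x 0 * aa (1-p) (t-1-x) g)
            + ww (1-p) (g+2) * ∑ x ∈ range t, aa p x 0 * aa (1-p) (t-1-x) (g+2) := by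
        rw [Finset.mul_sum, ← Finset.sum_add_distrib]
        exact Finset.sum_congr rfl fun x _ => by ring
      rw [e, ← ih g, ← ih (g+2)]
      have hw : ww p (g+1+2) = ww (1-p) (g+2) := ww_succ p (g+2) hp
      rw [hw, show t+1-1-t = 0 from by omega]
      simp [aa, aa_eq_zero]

lemma evensum (f : ℕ → ℕ) (hf : ∀ i, i % 2 = 1 → f i = 0) :
    ∀ n, ∑ i ∈ range (2*n), f i = ∑ j ∈ range n, f (2*j) := by
  intro n
  induction n with
  | zero => simp
  | succ n ih =>
    rw [show 2*(n+1) = (2*n+1)+1 from by omega, Finset.sum_range_succ, Finset.sum_range_succ,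
      Finset.sum_range_succ, ih, hf (2*n+1) (by omega)]
    simp

def MM (p k : ℕ) : ℕ := aa p (2*k) 0

lemma MM_zero (p : ℕ) : MM p 0 = 1 := by simp [MM, aa]

lemma MMRec (p : ℕ) (hp : p ≤ 1) (k : ℕ) :
    MM p (k+1) = ww p 1 * ∑ j ∈ range (k+1), MM p j * MM (1-p) (k-j) := by
  have h1 : MM p (k+1) = ww p 1 * aa p (2*k+1) 1 := by
    rw [MM, show 2*(k+1) = (2*k+1)+1 from by omega]
    simp [aa]
  rw [h1, LV p hp (2*k+1) 0]
  congr 1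
  have hodd : ∀ i, i % 2 = 1 → aa p i 0 * aa (1-p) (2*k+1-1-i) 0 = 0 := by
    intro i hi
    rw [aa_parity p i 0 (by omega), zero_mul]
  calc ∑ u ∈ range (2*k+1), aa p u 0 * aa (1-p) (2*k+1-1-u) 0
      = ∑ u ∈ range (2*(k+1)), aa p u 0 * aa (1-p) (2*k+1-1-u) 0 := by
        have e := Finset.sum_range_succ (fun u => aa p u 0 * aa (1-p) (2*k+1-1-u) 0) (2*k+1)
        rw [hodd (2*k+1) (by omega), add_zero] at e
        rw [show 2*(k+1) = (2*k+1)+1 from by omega]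
        exact e.symm
    _ = ∑ j ∈ range (k+1), aa p (2*j) 0 * aa (1-p) (2*k+1-1-2*j) 0 :=
        evensum _ hodd (k+1)
    _ = ∑ j ∈ range (k+1), MM p j * MM (1-p) (k-j) := by
        refine Finset.sum_congr rfl fun j hj => ?_
        rw [mem_range] at hj
        rw [MM, MM, show 2*k+1-1-2*j = 2*(k-j) from by omega]

lemma MM_double (k : ℕ) : MM 1 (k+1) = 2 * MM 0 (k+1) := by
  rw [MMRec 1 (by norm_num) k, MMRec 0 (by norm_num) k]
  have hw1 : ww 1 1 = 2 := by simp [ww]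
  have hw0 : ww 0 1 = 1 := by simp [ww]
  rw [hw1, hw0, one_mul]
  congr 1
  rw [← Finset.sum_range_reflect (fun j => MM 1 j * MM 0 (k-j)) (k+1)]
  refine Finset.sum_congr rfl fun j hj => ?_
  rw [mem_range] at hj
  rw [show k+1-1-j = k-j from by omega, show k-(k-j) = j from by omega, mul_comm]

lemma MM0Rec (k : ℕ) : MM 0 (k+1) = ∑ j ∈ range (k+1), MM 1 j * MM 0 (k-j) := by
  rw [MMRec 0 (by norm_num) k, show ww 0 1 = 1 from by simp [ww], one_mul]
  rw [← Finset.sum_range_reflect (fun j => MM 0 j * MM 1 (k-j)) (k+1)]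
  refine Finset.sum_congr rfl fun j hj => ?_
  rw [mem_range] at hj
  rw [show k+1-1-j = k-j from by omega, show k-(k-j) = j from by omega, mul_comm]

lemma MM1Rec (k : ℕ) : MM 1 (k+1) = MM 1 k + ∑ j ∈ range (k+1), MM 1 j * MM 1 (k-j) := by
  have h2 : ∑ j ∈ range (k+1), MM 1 j * MM 1 (k-j)
      = 2 * (∑ j ∈ range k, MM 1 j * MM 0 (k-j)) + MM 1 k := by
    rw [Finset.sum_range_succ, Nat.sub_self, MM_zero, mul_one, Finset.mul_sum]
    congr 1
    refine Finset.sum_congr rfl fun j hj => ?_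
    rw [mem_range] at hj
    rw [show k-j = (k-j-1)+1 from by omega, MM_double, ← mul_assoc, mul_comm (MM 1 j) 2,
      mul_assoc]
  rw [h2, MMRec 1 (by norm_num) k, show ww 1 1 = 2 from by simp [ww], Finset.sum_range_succ]
  simp only [Nat.sub_self, MM_zero, mul_one]
  omega
lemma det_hankel_MM (n p : ℕ) (hp : p ≤ 1) :
    (Matrix.of fun i j : Fin n => (MM p ((i:ℕ) + (j:ℕ)) : ℤ)).det
      = ∏ j : Fin n, (bb p (2*(j:ℕ)) (2*(j:ℕ)) : ℤ) := by
  set A : Matrix (Fin n) (Fin n) ℤ := Matrix.of fun i m => (aa p (2*(i:ℕ)) (2*(m:ℕ)) : ℤ) with hAdef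
  set B : Matrix (Fin n) (Fin n) ℤ := Matrix.of fun m j => (bb p (2*(j:ℕ)) (2*(m:ℕ)) : ℤ) with hBdef
  have hmat : (Matrix.of fun i j : Fin n => (MM p ((i:ℕ) + (j:ℕ)) : ℤ)) = A * B := by
    ext i j
    rw [Matrix.mul_apply]
    simp only [A, B, Matrix.of_apply]
    have hi := i.2
    have hj := j.2
    have hcast : ∀ m : Fin n, (aa p (2*(i:ℕ)) (2*(m:ℕ)) : ℤ) * (bb p (2*(j:ℕ)) (2*(m:ℕ)) : ℤ)
        = ((aa p (2*(i:ℕ)) (2*(m:ℕ)) * bb p (2*(j:ℕ)) (2*(m:ℕ)) : ℕ) : ℤ) := by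
      intro m; push_cast; ring
    have hfin : ∑ m : Fin n, aa p (2*(i:ℕ)) (2*(m:ℕ)) * bb p (2*(j:ℕ)) (2*(m:ℕ))
        = ∑ m ∈ Finset.range n, aa p (2*(i:ℕ)) (2*m) * bb p (2*(j:ℕ)) (2*m) := by
      rw [← Fin.sum_univ_eq_sum_range]
    have hodd : ∀ h, h % 2 = 1 → aa p (2*(i:ℕ)) h * bb p (2*(j:ℕ)) h = 0 := fun h hh => by
      rw [aa_parity p _ h (by omega), zero_mul]
    have hN : ∑ m ∈ Finset.range n, aa p (2*(i:ℕ)) (2*m) * bb p (2*(j:ℕ)) (2*m)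
        = MM p ((i:ℕ)+(j:ℕ)) := by
      have e1 := evensum (fun h => aa p (2*(i:ℕ)) h * bb p (2*(j:ℕ)) h) hodd n
      have e2 := split p (2*(j:ℕ)) (2*(i:ℕ)) (2*n) (by omega)
      rw [MM, show 2*((i:ℕ)+(j:ℕ)) = 2*(i:ℕ)+2*(j:ℕ) from by ring, ← e2, e1]
    rw [Finset.sum_congr rfl (fun m _ => hcast m), ← Nat.cast_sum, hfin, hN]
  have hA : A.det = 1 := by
    have htri : A.BlockTriangular OrderDual.toDual := by
      intro i j hij
      have hij' : i < j := hij
      have hij2 : (i:ℕ) < (j:ℕ) := hij'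
      simp only [A, Matrix.of_apply]
      rw [aa_eq_zero p _ _ (by omega)]
      rfl
    rw [Matrix.det_of_lowerTriangular A htri]
    have hd : ∀ i : Fin n, A i i = 1 := fun i => by
      simp only [A, Matrix.of_apply, aa_diag]; rfl
    simp [hd]
  have hB : B.det = ∏ j : Fin n, (bb p (2*(j:ℕ)) (2*(j:ℕ)) : ℤ) := by
    have htri : B.BlockTriangular id := by
      intro m j hij
      have hij' : (j:ℕ) < (m:ℕ) := hij
      simp only [B, Matrix.of_apply]
      rw [bb_eq_zero p _ _ (by omega)]
      rfl
    rw [Matrix.det_of_upperTriangular htri]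
    exact Finset.prod_congr rfl fun i _ => rfl
  rw [hmat, Matrix.det_mul, hA, hB, one_mul]
open Finset

/-! ### Path infrastructure -/

@[simp] lemma endpt_nil (p : Pt) : endpt p [] = p := rfl

lemma endpt_cons (p s : Pt) (l : List Pt) : endpt p (s::l) = endpt (p+s) l := rfl

lemma endpt_append (p : Pt) (l₁ l₂ : List Pt) :
    endpt p (l₁ ++ l₂) = endpt (endpt p l₁) l₂ := by
  simp [endpt, List.foldl_append]

@[simp] lemma pts_nil (p : Pt) : pts p [] = [p] := rfl

lemma pts_cons (p s : Pt) (l : List Pt) : pts p (s::l) = p :: pts (p+s) l := by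
  simp [pts, List.scanl]

lemma mem_pts_self (p : Pt) (l : List Pt) : p ∈ pts p l := by
  cases l <;> simp [pts_cons]

lemma mem_pts_append {v p : Pt} (l₁ l₂ : List Pt) :
    v ∈ pts p (l₁ ++ l₂) ↔ v ∈ pts p l₁ ∨ v ∈ pts (endpt p l₁) l₂ := by
  induction l₁ generalizing p with
  | nil =>
    simp only [List.nil_append, pts_nil, endpt_nil, List.mem_singleton]
    constructor
    · intro h; right; exact h
    · rintro (rfl | h)
      · exact mem_pts_self _ _
      · exact h
  | cons s t ih =>
    simp only [List.cons_append, pts_cons, List.mem_cons, endpt_cons, ih, or_assoc]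

lemma endpt_mem_pts (p : Pt) (l : List Pt) : endpt p l ∈ pts p l := by
  induction l generalizing p with
  | nil => simp
  | cons s t ih => rw [pts_cons, endpt_cons]; exact List.mem_cons_of_mem _ (ih (p+s))

lemma endpt_prefix_mem_pts (p : Pt) (l₁ l₂ : List Pt) :
    endpt p l₁ ∈ pts p (l₁ ++ l₂) := by
  rw [mem_pts_append]; right; exact mem_pts_self _ _

lemma endpt_translate (t : Pt) : ∀ (l : List Pt) (p : Pt), endpt (p+t) l = endpt p l + t := by
  intro l
  induction l with
  | nil => intro p; simp
  | cons s l ih =>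
    intro p
    rw [endpt_cons, endpt_cons, show p+t+s = (p+s)+t from by ring, ih]

lemma pts_translate (t : Pt) : ∀ (l : List Pt) (p : Pt),
    pts (p+t) l = (pts p l).map (· + t) := by
  intro l
  induction l with
  | nil => intro p; simp
  | cons s l ih =>
    intro p
    rw [pts_cons, pts_cons, show p+t+s = (p+s)+t from by ring, ih, List.map_cons]

lemma mem_pts_translate {v : Pt} (t : Pt) (l : List Pt) (p : Pt) :
    v ∈ pts (p+t) l ↔ v - t ∈ pts p l := by
  rw [pts_translate, List.mem_map]
  constructor
  · rintro ⟨w, hw, rfl⟩; simpa using hw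
  · intro h; exact ⟨v - t, h, by ring⟩

/-- Steps predicate. -/
def OkSteps (l : List Pt) : Prop := ∀ s ∈ l, s = ((1:ℤ), (1:ℤ)) ∨ s = (1, -1) ∨ s = (2, 0)

lemma length_le_x {l : List Pt} (hs : OkSteps l) :
    ∀ p : Pt, p.1 + l.length ≤ (endpt p l).1 := by
  induction l with
  | nil => intro p; simp
  | cons s t ih =>
    intro p
    have hst : s = ((1:ℤ),(1:ℤ)) ∨ s = (1,-1) ∨ s = (2,0) := hs s (by simp)
    have ht : OkSteps t := fun x hx => hs x (List.mem_cons_of_mem _ hx)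
    have := ih ht (p + s)
    have hx : p.1 + 1 ≤ (p+s).1 := by
      rcases hst with rfl | rfl | rfl <;> simp <;> omega
    rw [endpt_cons, List.length_cons]
    push_cast at this ⊢
    omega

lemma x_mono {l : List Pt} (hs : OkSteps l) (p : Pt) : p.1 ≤ (endpt p l).1 := by
  have := length_le_x hs p
  have h0 : (0:ℤ) ≤ l.length := by positivity
  omega

lemma parity_endpt {l : List Pt} (hs : OkSteps l) :
    ∀ p : Pt, ((endpt p l).1 - (endpt p l).2) % 2 = (p.1 - p.2) % 2 := by
  induction l with
  | nil => intro p; simp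
  | cons s t ih =>
    intro p
    have hst : s = ((1:ℤ),(1:ℤ)) ∨ s = (1,-1) ∨ s = (2,0) := hs s (by simp)
    have ht : OkSteps t := fun x hx => hs x (List.mem_cons_of_mem _ hx)
    rw [endpt_cons]
    have := ih ht (p+s)
    rcases hst with rfl | rfl | rfl <;> simp at this ⊢ <;> omega
/-! ### Finiteness -/

lemma isLargePath_finite (p q : Pt) : Finite {l : List Pt // IsLargePath p q l} := by
  classical
  set S : Set Pt := {((1:ℤ),(1:ℤ)), ((1:ℤ),(-1:ℤ)), ((2:ℤ),(0:ℤ))} with hS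
  have hSfin : S.Finite := by
    apply Set.Finite.insert
    apply Set.Finite.insert
    exact Set.finite_singleton _
  haveI : Finite ↥S := hSfin.to_subtype
  set N : ℕ := (q.1 - p.1).toNat with hN
  haveI : Finite {l : List ↥S | l.length ≤ N} := (List.finite_length_le ↥S N).to_subtype
  have hmem : ∀ (l : List Pt), IsLargePath p q l → ∀ s ∈ l, s ∈ S := by
    intro l hl s hs
    rcases hl.1 s hs with rfl | rfl | rfl <;> simp [hS]
  have hlen : ∀ (l : List Pt) (hl : IsLargePath p q l),
      (l.pmap (fun s hs => (⟨s, hs⟩ : ↥S)) (hmem l hl)).length ≤ N := by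
    intro l hl
    simp only [List.length_pmap]
    have h1 := length_le_x hl.1 p
    rw [hl.2.2] at h1
    omega
  set F : {l : List Pt // IsLargePath p q l} → {l : List ↥S | l.length ≤ N} :=
    fun x => ⟨x.1.pmap (fun s hs => (⟨s, hs⟩ : ↥S)) (hmem x.1 x.2), hlen x.1 x.2⟩ with hF
  have hFinj : Function.Injective F := by
    rintro ⟨l, hl⟩ ⟨l', hl'⟩ hEq
    have h2 : (l.pmap (fun s hs => (⟨s, hs⟩ : ↥S)) (hmem l hl)).map Subtype.val
        = (l'.pmap (fun s hs => (⟨s, hs⟩ : ↥S)) (hmem l' hl')).map Subtype.val :=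
      congrArg (List.map Subtype.val) (congrArg Subtype.val hEq)
    simp only [List.map_pmap, List.pmap_eq_map, List.map_id] at h2
    exact Subtype.ext (by simpa using h2)
  exact Finite.of_injective F hFinj

lemma subtype_and_finite {P Q : List Pt → Prop}
    (h : Finite {l : List Pt // P l}) : Finite {l : List Pt // P l ∧ Q l} := by
  apply Finite.of_injective (fun x : {l // P l ∧ Q l} => (⟨x.1, x.2.1⟩ : {l // P l}))
  rintro ⟨l, hl⟩ ⟨l', hl'⟩ h
  simpa [Subtype.ext_iff] using h

lemma isSmallPath_finite (p q : Pt) : Finite {l : List Pt // IsSmallPath p q l} :=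
  subtype_and_finite (isLargePath_finite p q)

/-! ### First-return decomposition -/

lemma first_return : ∀ (n : ℕ) (l : List Pt), l.length ≤ n → ∀ p : Pt, OkSteps l →
    (endpt p l).2 < p.2 →
    ∃ Q R, l = Q ++ ((1:ℤ),(-1:ℤ)) :: R ∧ (∀ v ∈ pts p Q, p.2 ≤ v.2) ∧ (endpt p Q).2 = p.2 := by
  intro n
  induction n with
  | zero =>
    intro l hl p _ hdrop
    have : l = [] := List.eq_nil_of_length_eq_zero (by omega)
    subst this
    simp at hdrop
  | succ n ih =>
    intro l hl p hs hdrop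
    match l with
    | [] => simp at hdrop
    | s :: t =>
      have hst : s = ((1:ℤ),(1:ℤ)) ∨ s = (1,-1) ∨ s = (2,0) := hs s (by simp)
      have hts : OkSteps t := fun x hx => hs x (List.mem_cons_of_mem _ hx)
      have hlt : t.length ≤ n := by simpa using hl
      rcases hst with rfl | rfl | rfl
      · -- Up step
        have hdrop' : (endpt (p+(1,1)) t).2 < (p+(1,1)).2 := by
          rw [endpt_cons] at hdrop
          simp only [Prod.snd_add]
          omega
        obtain ⟨Q₁, R₁, rfl, hQ₁pts, hQ₁end⟩ := ih t hlt (p+(1,1)) hts hdrop'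
        -- now from the point after the down-step
        set p₂ : Pt := endpt (p+(1,1)) Q₁ + (1,-1) with hp₂
        have hp₂y : p₂.2 = p.2 := by
          simp only [hp₂, Prod.snd_add]
          rw [hQ₁end]
          simp
        have hR₁len : R₁.length ≤ n := by
          rw [List.length_append, List.length_cons] at hlt
          omega
        have hR₁s : OkSteps R₁ := fun x hx => hts x (by simp [hx])
        have hdrop₂ : (endpt p₂ R₁).2 < p₂.2 := by
          have : endpt p₂ R₁ = endpt p ((1,1) :: (Q₁ ++ (1,-1) :: R₁)) := by
            rw [endpt_cons, endpt_append, endpt_cons]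
          rw [this, hp₂y]
          exact hdrop
        obtain ⟨Q₂, R₂, rfl, hQ₂pts, hQ₂end⟩ := ih R₁ hR₁len p₂ hR₁s hdrop₂
        refine ⟨(1,1) :: (Q₁ ++ (1,-1) :: Q₂), R₂, by simp, ?_, ?_⟩
        · intro v hv
          rw [pts_cons, List.mem_cons] at hv
          rcases hv with rfl | hv
          · exact le_refl _
          · rw [mem_pts_append] at hv
            rcases hv with hv | hv
            · have := hQ₁pts v hv
              simp only [Prod.snd_add] at this
              omega
            · rw [pts_cons, List.mem_cons] at hv
              rcases hv with rfl | hv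
              · have : (endpt (p+(1,1)) Q₁).2 = (p+(1,1)).2 := hQ₁end
                simp only [Prod.snd_add] at this ⊢
                omega
              · have := hQ₂pts v hv
                omega
        · rw [endpt_cons, endpt_append, endpt_cons, ← hp₂, hQ₂end, hp₂y]
      · -- Down step: immediate return
        refine ⟨[], t, rfl, ?_, rfl⟩
        intro v hv
        simp only [pts_nil, List.mem_singleton] at hv
        subst hv
        exact le_refl _
      · -- Level step
        have hdrop' : (endpt (p+(2,0)) t).2 < (p+(2,0)).2 := by
          rw [endpt_cons] at hdrop
          simp only [Prod.snd_add]
          omega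
        obtain ⟨Q₁, R₁, rfl, hQ₁pts, hQ₁end⟩ := ih t hlt (p+(2,0)) hts hdrop'
        refine ⟨(2,0) :: Q₁, R₁, by simp, ?_, ?_⟩
        · intro v hv
          rw [pts_cons, List.mem_cons] at hv
          rcases hv with rfl | hv
          · exact le_refl _
          · have := hQ₁pts v hv
            simp only [Prod.snd_add] at this
            omega
        · rw [endpt_cons, hQ₁end]
          simp
/-! ### Uniqueness of first-return decomposition -/

lemma decomp_unique {p : Pt} {Q R Q' R' : List Pt}
    (hE : Q ++ ((1:ℤ),(-1:ℤ)) :: R = Q' ++ ((1:ℤ),(-1:ℤ)) :: R')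
    (hQ : ∀ v ∈ pts p Q, p.2 ≤ v.2) (hQe : (endpt p Q).2 = p.2)
    (hQ' : ∀ v ∈ pts p Q', p.2 ≤ v.2) (hQe' : (endpt p Q').2 = p.2) :
    Q = Q' ∧ R = R' := by
  rcases List.append_eq_append_iff.mp hE with ⟨a, ha1, ha2⟩ | ⟨c, hc1, hc2⟩
  · rcases a with _ | ⟨s, a'⟩
    · simp only [List.append_nil] at ha1
      simp only [List.nil_append, List.cons.injEq] at ha2
      exact ⟨ha1.symm, ha2.2⟩
    · exfalso
      simp only [List.cons_append, List.cons.injEq] at ha2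
      obtain ⟨rfl, rfl⟩ := ha2
      subst ha1
      have hv : endpt p Q + (1,-1) ∈ pts p (Q ++ (1,-1) :: a') := by
        rw [mem_pts_append, pts_cons]
        right
        exact List.mem_cons_of_mem _ (mem_pts_self _ _)
      have := hQ' _ hv
      simp only [Prod.snd_add] at this
      omega
  · rcases c with _ | ⟨s, c'⟩
    · simp only [List.append_nil] at hc1
      simp only [List.nil_append, List.cons.injEq] at hc2
      exact ⟨hc1, hc2.2.symm⟩
    · exfalso
      simp only [List.cons_append, List.cons.injEq] at hc2
      obtain ⟨rfl, rfl⟩ := hc2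
      subst hc1
      have hv : endpt p Q' + (1,-1) ∈ pts p (Q' ++ (1,-1) :: c') := by
        rw [mem_pts_append, pts_cons]
        right
        exact List.mem_cons_of_mem _ (mem_pts_self _ _)
      have := hQ _ hv
      simp only [Prod.snd_add] at this
      omega

/-! ### Smallness as a splitting property -/

def NoFlat (p : Pt) (l : List Pt) : Prop :=
  ∀ l₁ l₂, l = l₁ ++ ((2:ℤ),(0:ℤ)) :: l₂ → (endpt p l₁).2 ≠ 0

lemma isSmall_iff {p q : Pt} {l : List Pt} :
    IsSmallPath p q l ↔ IsLargePath p q l ∧ NoFlat p l := by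
  constructor
  · rintro ⟨hL, hsm⟩
    refine ⟨hL, ?_⟩
    intro l₁ l₂ hsplit
    subst hsplit
    have hlen : l₁.length < (l₁ ++ (2,0) :: l₂).length := by
      rw [List.length_append, List.length_cons]; omega
    have hget : (l₁ ++ (2,0) :: l₂).get ⟨l₁.length, hlen⟩ = (2,0) := by
      rw [List.get_eq_getElem, List.getElem_append_right (le_refl l₁.length)]
      simp
    have htake : (l₁ ++ (2,0) :: l₂).take l₁.length = l₁ := List.take_left
    have := hsm l₁.length hlen hget
    rwa [htake] at this
  · rintro ⟨hL, hnf⟩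
    refine ⟨hL, ?_⟩
    intro i hi hget
    have hsplit : l = l.take i ++ (2,0) :: l.drop (i+1) := by
      conv_lhs => rw [← List.take_append_drop i l]
      congr 1
      rw [List.drop_eq_getElem_cons hi]
      simp only [List.get_eq_getElem] at hget
      rw [hget]
    exact hnf (l.take i) (l.drop (i+1)) hsplit

/-! ### Translation of path predicates -/

lemma isLarge_shift (t : ℤ) (p q : Pt) (l : List Pt) :
    IsLargePath (p + (t,0)) (q + (t,0)) l ↔ IsLargePath p q l := by
  unfold IsLargePath
  constructor
  · rintro ⟨h1, h2, h3⟩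
    refine ⟨h1, ?_, ?_⟩
    · intro v hv
      have : v + (t,0) ∈ pts (p + (t,0)) l := by
        rw [mem_pts_translate]
        simpa using hv
      have := h2 _ this
      simpa using this
    · have := endpt_translate (t,0) l p
      rw [this] at h3
      have : endpt p l = q := by
        have := congrArg (· - ((t:ℤ),(0:ℤ))) h3
        simpa using this
      exact this
  · rintro ⟨h1, h2, h3⟩
    refine ⟨h1, ?_, ?_⟩
    · intro v hv
      rw [mem_pts_translate] at hv
      have := h2 _ hv
      simpa using this
    · rw [endpt_translate, h3]

lemma noflat_shift (t : ℤ) (p : Pt) (l : List Pt) :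
    NoFlat (p + (t,0)) l ↔ NoFlat p l := by
  unfold NoFlat
  constructor
  · intro h l₁ l₂ hs
    have := h l₁ l₂ hs
    rw [endpt_translate] at this
    simpa using this
  · intro h l₁ l₂ hs
    rw [endpt_translate]
    have := h l₁ l₂ hs
    simpa using this
/-! ### The composition map and its properties -/

def comp2 (Q R : List Pt) : List Pt := ((1:ℤ),(1:ℤ)) :: (Q ++ ((1:ℤ),(-1:ℤ)) :: R)

lemma noflat_comp2 {Q R : List Pt} (hQ : ∀ v ∈ pts ((1:ℤ),(1:ℤ)) Q, 1 ≤ v.2) :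
    NoFlat (0,0) (comp2 Q R) ↔ NoFlat (endpt ((1:ℤ),(1:ℤ)) Q + (1,-1)) R := by
  have hbase : ((0:ℤ),(0:ℤ)) + (1,1) = ((1:ℤ),(1:ℤ)) := by simp
  constructor
  · intro h r₁ r₂ hs
    have hsplit : comp2 Q R = ((1,1) :: (Q ++ (1,-1) :: r₁)) ++ (2,0) :: r₂ := by
      rw [comp2, hs]
      simp
    have := h _ _ hsplit
    rw [endpt_cons, hbase, endpt_append, endpt_cons] at this
    exact this
  · intro h l₁ l₂ hs
    rcases l₁ with _ | ⟨s, l₁'⟩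
    · exfalso
      rw [comp2] at hs
      simp only [List.nil_append, List.cons.injEq] at hs
      exact absurd hs.1 (by decide)
    · rw [comp2] at hs
      simp only [List.cons_append, List.cons.injEq] at hs
      obtain ⟨rfl, hs2⟩ := hs
      rcases List.append_eq_append_iff.mp hs2 with ⟨a, ha1, ha2⟩ | ⟨c, hc1, hc2⟩
      · rcases a with _ | ⟨s', a'⟩
        · exfalso
          simp only [List.nil_append, List.cons.injEq] at ha2
          exact absurd ha2.1 (by decide)
        · simp only [List.cons_append, List.cons.injEq] at ha2
          obtain ⟨rfl, rfl⟩ := ha2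
          subst ha1
          rw [endpt_cons, hbase, endpt_append, endpt_cons]
          exact h a' l₂ rfl
      · rcases c with _ | ⟨s', c'⟩
        · exfalso
          simp only [List.nil_append, List.cons.injEq] at hc2
          exact absurd hc2.1 (by decide)
        · simp only [List.cons_append, List.cons.injEq] at hc2
          obtain ⟨rfl, rfl⟩ := hc2
          subst hc1
          rw [endpt_cons, hbase]
          have hv := hQ (endpt ((1:ℤ),(1:ℤ)) l₁') (endpt_prefix_mem_pts _ _ _)
          omega

lemma comp2_isLarge {k j : ℕ} {Q R : List Pt} (hjk : j ≤ k)
    (hQ : IsLargePath (0,0) (2*(j:ℤ), 0) Q)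
    (hR : IsLargePath (0,0) (2*((k:ℤ)-(j:ℤ)), 0) R) :
    IsLargePath (0,0) (2*(k:ℤ)+2, 0) (comp2 Q R) ∧
      (∀ v ∈ pts ((1:ℤ),(1:ℤ)) Q, 1 ≤ v.2) ∧
      endpt ((1:ℤ),(1:ℤ)) Q = (2*(j:ℤ)+1, 1) := by
  have hbase : ((0:ℤ),(0:ℤ)) + (1,1) = ((1:ℤ),(1:ℤ)) := by simp
  have hQpts : ∀ v ∈ pts ((1:ℤ),(1:ℤ)) Q, 1 ≤ v.2 := by
    intro v hv
    rw [show ((1:ℤ),(1:ℤ)) = ((0:ℤ),(0:ℤ)) + (1,1) from by simp, mem_pts_translate] at hv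
    have := hQ.2.1 _ hv
    have h2 : (v - ((1:ℤ),(1:ℤ))).2 = v.2 - 1 := rfl
    omega
  have hQend : endpt ((1:ℤ),(1:ℤ)) Q = (2*(j:ℤ)+1, 1) := by
    rw [show ((1:ℤ),(1:ℤ)) = ((0:ℤ),(0:ℤ)) + (1,1) from by simp, endpt_translate, hQ.2.2]
    ext <;> simp
  have hRbase : endpt ((1:ℤ),(1:ℤ)) Q + (1,-1) = ((0:ℤ),(0:ℤ)) + (2*(j:ℤ)+2, 0) := by
    rw [hQend]; ext <;> simp <;> ring
  have hR' : IsLargePath ((0,0) + ((2*(j:ℤ)+2 : ℤ),(0:ℤ)))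
      ((2*((k:ℤ)-(j:ℤ)), 0) + ((2*(j:ℤ)+2 : ℤ),(0:ℤ))) R := by
    rw [isLarge_shift]
    exact hR
  refine ⟨⟨?_, ?_, ?_⟩, hQpts, hQend⟩
  · intro s hs
    rw [comp2, List.mem_cons, List.mem_append, List.mem_cons] at hs
    rcases hs with rfl | hs | rfl | hs
    · left; rfl
    · exact hQ.1 s hs
    · right; left; rfl
    · exact hR.1 s hs
  · intro v hv
    rw [comp2, pts_cons, hbase, List.mem_cons, mem_pts_append, pts_cons, List.mem_cons] at hv
    rcases hv with rfl | hv | rfl | hv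
    · simp
    · have := hQpts v hv; omega
    · rw [hQend]; simp
    · rw [hRbase] at hv
      have := hR'.2.1 v hv
      exact this
  · rw [comp2, endpt_cons, hbase, endpt_append, endpt_cons, hRbase, hR'.2.2]
    ext <;> push_cast <;> simp <;> ring
/-! ### Existence of the decomposition -/

lemma exists_decomp {k : ℕ} {l : List Pt}
    (hl : IsLargePath (0,0) (2*(k:ℤ)+2, 0) l) (hh : l.head? = some ((1:ℤ),(1:ℤ))) :
    ∃ (j : ℕ) (Q R : List Pt), j ≤ k ∧ l = comp2 Q R ∧
      IsLargePath (0,0) (2*(j:ℤ), 0) Q ∧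
      IsLargePath (0,0) (2*((k:ℤ)-(j:ℤ)), 0) R := by
  have hbase : ((0:ℤ),(0:ℤ)) + (1,1) = ((1:ℤ),(1:ℤ)) := by simp
  rcases l with _ | ⟨s, t⟩
  · simp at hh
  · simp only [List.head?_cons, Option.some.injEq] at hh
    subst hh
    have hts : OkSteps t := fun x hx => hl.1 x (List.mem_cons_of_mem _ hx)
    have htend : endpt ((1:ℤ),(1:ℤ)) t = (2*(k:ℤ)+2, 0) := by
      have := hl.2.2
      rwa [endpt_cons, hbase] at this
    have hdrop : (endpt ((1:ℤ),(1:ℤ)) t).2 < ((1:ℤ),(1:ℤ)).2 := by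
      rw [htend]; norm_num
    obtain ⟨Q, R, rfl, hQpts, hQe⟩ := first_return t.length t le_rfl _ hts hdrop
    set E : Pt := endpt ((1:ℤ),(1:ℤ)) Q with hE
    have hQs : OkSteps Q := fun x hx => hts x (by simp [hx])
    have hRs : OkSteps R := fun x hx => hts x (by simp [hx])
    have hQe' : E.2 = 1 := hQe
    have hpar : (E.1 - E.2) % 2 = 0 := by
      have := parity_endpt hQs ((1:ℤ),(1:ℤ))
      rw [← hE] at this
      simpa using this
    have hx1 : (1:ℤ) ≤ E.1 := by
      have := x_mono hQs ((1:ℤ),(1:ℤ))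
      rw [← hE] at this
      simpa using this
    have hRend : endpt (E + (1,-1)) R = (2*(k:ℤ)+2, 0) := by
      rw [← endpt_cons, hE, ← endpt_append]
      exact htend
    have hx2 : E.1 + 1 ≤ 2*(k:ℤ)+2 := by
      have := x_mono hRs (E + (1,-1))
      rw [hRend] at this
      have h2 : (E + ((1:ℤ),(-1:ℤ))).1 = E.1 + 1 := rfl
      simp only [h2] at this
      simpa using this
    have heven : Even (E.1 - 1) := Int.even_iff.mpr (by omega)
    obtain ⟨c, hc⟩ := heven
    refine ⟨c.toNat, Q, R, by omega, rfl, ⟨hQs, ?_, ?_⟩, ?_⟩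
    · -- Q stays nonnegative from (0,0)
      intro v hv
      have hv' : v + ((1:ℤ),(1:ℤ)) ∈ pts ((1:ℤ),(1:ℤ)) Q := by
        rw [← hbase, mem_pts_translate]
        simpa using hv
      have := hQpts _ hv'
      have h2 : (v + ((1:ℤ),(1:ℤ))).2 = v.2 + 1 := rfl
      simp only [Prod.snd] at this
      omega
    · -- endpoint of Q
      have hadd : endpt ((0:ℤ),(0:ℤ)) Q + (1,1) = E := by
        rw [← endpt_translate, hbase, hE]
      have h3 : endpt ((0:ℤ),(0:ℤ)) Q = E - (1,1) := eq_sub_of_add_eq hadd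
      rw [h3]
      have h4 : (E - ((1:ℤ),(1:ℤ))).1 = E.1 - 1 := rfl
      have h5 : (E - ((1:ℤ),(1:ℤ))).2 = E.2 - 1 := rfl
      refine Prod.ext ?_ ?_
      · rw [h4]; omega
      · rw [h5]; omega
    · -- R is a large path after shifting
      have hR : IsLargePath (E + (1,-1)) (2*(k:ℤ)+2, 0) R := by
        refine ⟨hRs, ?_, hRend⟩
        intro v hv
        have hv2 : v ∈ pts ((0:ℤ),(0:ℤ)) ((1,1) :: (Q ++ (1,-1) :: R)) := by
          rw [pts_cons, hbase, List.mem_cons, mem_pts_append, pts_cons, List.mem_cons, ← hE]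
          right; right; right
          exact hv
        exact hl.2.1 v hv2
      have hEd : E + ((1:ℤ),(-1:ℤ)) = ((0:ℤ),(0:ℤ)) + ((E.1+1 : ℤ), (0:ℤ)) := by
        refine Prod.ext ?_ ?_
        · show E.1 + 1 = 0 + (E.1+1); ring
        · show E.2 + (-1) = 0 + 0; omega
      have htgt : ((2*(k:ℤ)+2 : ℤ), (0:ℤ))
          = ((2*((k:ℤ)-(c.toNat:ℤ)) : ℤ), (0:ℤ)) + ((E.1+1 : ℤ), (0:ℤ)) := by
        refine Prod.ext ?_ ?_
        · show 2*(k:ℤ)+2 = 2*((k:ℤ)-(c.toNat:ℤ)) + (E.1+1); omega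
        · show (0:ℤ) = 0 + 0; ring
      rw [hEd, htgt] at hR
      rwa [isLarge_shift] at hR
/-! ### Counting lemmas -/

lemma head_cases {q1 : ℤ} {l : List Pt} (hl : IsLargePath (0,0) (q1, 0) l) (hq : 0 < q1) :
    l.head? = some ((1:ℤ),(1:ℤ)) ∨ l.head? = some ((2:ℤ),(0:ℤ)) := by
  rcases l with _ | ⟨s, t⟩
  · exfalso
    have := hl.2.2
    simp only [endpt_nil, Prod.mk.injEq] at this
    omega
  · rcases hl.1 s (by simp) with rfl | rfl | rfl
    · left; rfl
    · exfalso
      have hv : ((0:ℤ),(0:ℤ)) + (1,-1) ∈ pts (0,0) ((1,-1) :: t) := by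
        rw [pts_cons]
        exact List.mem_cons_of_mem _ (mem_pts_self _ _)
      have := hl.2.1 _ hv
      simp at this
    · right; rfl

/-- The type of large Schröder paths of semilength `k`. -/
abbrev LgT (k : ℕ) := {l : List Pt // IsLargePath (0, 0) (2 * (k:ℤ), 0) l}

/-- The type of small Schröder paths of semilength `k`. -/
abbrev SmT (k : ℕ) := {l : List Pt // IsSmallPath (0, 0) (2 * (k:ℤ), 0) l}

instance (k : ℕ) : Finite (LgT k) := isLargePath_finite _ _
instance (k : ℕ) : Finite (SmT k) := isSmallPath_finite _ _

lemma schR_def (k : ℕ) : schR k = Nat.card (LgT k) := rfl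
lemma schS_def (k : ℕ) : schS k = Nat.card (SmT k) := rfl

lemma schR_zero : schR 0 = 1 := by
  rw [schR_def]
  haveI : Unique (LgT 0) := by
    refine ⟨⟨⟨[], ?_⟩⟩, ?_⟩
    · refine ⟨by simp [OkSteps], ?_, by simp⟩
      intro v hv
      simp only [pts_nil, List.mem_singleton] at hv
      subst hv; simp
    · rintro ⟨l, hl⟩
      have h1 := length_le_x hl.1 (0,0)
      rw [hl.2.2] at h1
      simp only [Prod.fst] at h1
      have : l.length = 0 := by push_cast at h1; omega
      have : l = [] := List.eq_nil_of_length_eq_zero this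
      subst this
      rfl
  exact Nat.card_unique

lemma schS_zero : schS 0 = 1 := by
  rw [schS_def]
  haveI : Unique (SmT 0) := by
    refine ⟨⟨⟨[], ?_, ?_⟩⟩, ?_⟩
    · refine ⟨by simp [OkSteps], ?_, by simp⟩
      intro v hv
      simp only [pts_nil, List.mem_singleton] at hv
      subst hv; simp
    · intro i h
      simp at h
    · rintro ⟨l, hl⟩
      have h1 := length_le_x hl.1.1 (0,0)
      rw [hl.1.2.2] at h1
      simp only [Prod.fst] at h1
      have : l.length = 0 := by push_cast at h1; omega
      have : l = [] := List.eq_nil_of_length_eq_zero this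
      subst this
      rfl
  exact Nat.card_unique
lemma cast_sub_eq (k j : ℕ) (h : j ≤ k) :
    ((2*((k-j : ℕ):ℤ), (0:ℤ)) : Pt) = (2*((k:ℤ)-(j:ℤ)), (0:ℤ)) := by
  refine Prod.ext ?_ rfl
  show 2*((k-j:ℕ):ℤ) = 2*((k:ℤ)-(j:ℤ))
  rw [Nat.cast_sub h]

lemma card_headU (k : ℕ) :
    Nat.card {l : List Pt // IsLargePath (0,0) (2*(k:ℤ)+2, 0) l
        ∧ l.head? = some ((1:ℤ),(1:ℤ))}
      = ∑ j ∈ Finset.range (k+1), schR j * schR (k - j) := by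
  classical
  let F : (Σ j : Fin (k+1), LgT (j:ℕ) × LgT (k - (j:ℕ))) →
      {l : List Pt // IsLargePath (0,0) (2*(k:ℤ)+2, 0) l
        ∧ l.head? = some ((1:ℤ),(1:ℤ))} := fun x =>
    ⟨comp2 x.2.1.1 x.2.2.1,
      (comp2_isLarge (Nat.lt_succ_iff.mp x.1.2) x.2.1.2
        (by rw [← cast_sub_eq k x.1 (Nat.lt_succ_iff.mp x.1.2)]; exact x.2.2.2)).1,
      rfl⟩
  have hFbij : Function.Bijective F := by
    constructor
    · rintro ⟨j₁, ⟨Q₁, hQ₁⟩, ⟨R₁, hR₁⟩⟩ ⟨j₂, ⟨Q₂, hQ₂⟩, ⟨R₂, hR₂⟩⟩ hEq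
      have hjk₁ : (j₁:ℕ) ≤ k := Nat.lt_succ_iff.mp j₁.2
      have hjk₂ : (j₂:ℕ) ≤ k := Nat.lt_succ_iff.mp j₂.2
      have c₁ := comp2_isLarge hjk₁ hQ₁ (by rw [← cast_sub_eq k j₁ hjk₁]; exact hR₁)
      have c₂ := comp2_isLarge hjk₂ hQ₂ (by rw [← cast_sub_eq k j₂ hjk₂]; exact hR₂)
      have hv : comp2 Q₁ R₁ = comp2 Q₂ R₂ := congrArg Subtype.val hEq
      rw [comp2, comp2] at hv
      simp only [List.cons.injEq, true_and] at hv
      obtain ⟨hQQ, hRR⟩ := decomp_unique hv c₁.2.1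
        (by rw [c₁.2.2]) c₂.2.1 (by rw [c₂.2.2])
      subst hQQ
      subst hRR
      have hj : j₁ = j₂ := by
        have e1 := c₁.2.2
        have e2 := c₂.2.2
        rw [e1] at e2
        have := congrArg Prod.fst e2
        simp only [Prod.fst] at this
        have hnat : (j₁:ℕ) = (j₂:ℕ) := by omega
        exact Fin.ext hnat
      subst hj
      rfl
    · rintro ⟨l, hl, hh⟩
      obtain ⟨j, Q, R, hjk, rfl, hQ, hR⟩ := exists_decomp hl hh
      refine ⟨⟨⟨j, by omega⟩, ⟨Q, hQ⟩, ⟨R, ?_⟩⟩, ?_⟩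
      · rw [cast_sub_eq k j hjk]; exact hR
      · apply Subtype.ext; rfl
  rw [← Nat.card_congr (Equiv.ofBijective F hFbij)]
  haveI : ∀ (m : ℕ), Fintype (LgT m) := fun m => Fintype.ofFinite _
  rw [Nat.card_eq_fintype_card, Fintype.card_sigma]
  rw [Fin.sum_univ_eq_sum_range (fun j => Fintype.card (LgT j × LgT (k - j))) (k+1)]
  refine Finset.sum_congr rfl fun j hj => ?_
  rw [Fintype.card_prod, schR_def, schR_def, Nat.card_eq_fintype_card, Nat.card_eq_fintype_card]

lemma card_headL (k : ℕ) :
    Nat.card {l : List Pt // IsLargePath (0,0) (2*(k:ℤ)+2, 0) l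
        ∧ l.head? = some ((2:ℤ),(0:ℤ))} = schR k := by
  classical
  have hbase : ((0:ℤ),(0:ℤ)) + (2,0) = ((2:ℤ),(0:ℤ)) := by simp
  have hshift : ∀ t : List Pt, IsLargePath ((0,0) + ((2:ℤ),(0:ℤ)))
      ((2*(k:ℤ), 0) + ((2:ℤ),(0:ℤ))) t ↔ IsLargePath (0,0) (2*(k:ℤ), 0) t := by
    intro t
    exact isLarge_shift 2 (0,0) (2*(k:ℤ), 0) t
  have htgt : ((2*(k:ℤ), (0:ℤ)) : Pt) + ((2:ℤ),(0:ℤ)) = (2*(k:ℤ)+2, 0) := by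
    refine Prod.ext ?_ ?_ <;> simp
  have FP : ∀ x : LgT k, IsLargePath (0,0) (2*(k:ℤ)+2, 0) (((2:ℤ),(0:ℤ)) :: x.1) := by
    intro x
    have h2 : IsLargePath (((0:ℤ),(0:ℤ)) + ((2:ℤ),(0:ℤ)))
        ((2*(k:ℤ), 0) + ((2:ℤ),(0:ℤ))) x.1 := (hshift x.1).mpr x.2
    rw [htgt, hbase] at h2
    refine ⟨?_, ?_, ?_⟩
    · intro s hs
      rcases List.mem_cons.mp hs with rfl | hs
      · right; right; rfl
      · exact h2.1 s hs
    · intro v hv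
      rw [pts_cons, hbase] at hv
      rcases List.mem_cons.mp hv with rfl | hv
      · simp
      · exact h2.2.1 v hv
    · rw [endpt_cons, hbase, h2.2.2]
  let F : LgT k → {l : List Pt // IsLargePath (0,0) (2*(k:ℤ)+2, 0) l
      ∧ l.head? = some ((2:ℤ),(0:ℤ))} := fun x => ⟨((2:ℤ),(0:ℤ)) :: x.1, FP x, rfl⟩
  have hFbij : Function.Bijective F := by
    constructor
    · rintro ⟨t₁, h₁⟩ ⟨t₂, h₂⟩ hEq
      have := congrArg Subtype.val hEq
      simp only [F, List.cons.injEq, true_and] at this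
      exact Subtype.ext this
    · rintro ⟨l, hl, hh⟩
      rcases l with _ | ⟨s, t⟩
      · simp at hh
      · simp only [List.head?_cons, Option.some.injEq] at hh
        subst hh
        have h2 : IsLargePath ((2:ℤ),(0:ℤ)) (2*(k:ℤ)+2, 0) t := by
          refine ⟨fun s hs => hl.1 s (List.mem_cons_of_mem _ hs), ?_, ?_⟩
          · intro v hv
            apply hl.2.1
            rw [pts_cons, hbase]
            exact List.mem_cons_of_mem _ hv
          · have := hl.2.2
            rwa [endpt_cons, hbase] at this
        rw [← hbase, ← htgt, hshift] at h2
        exact ⟨⟨t, h2⟩, Subtype.ext rfl⟩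
  rw [← Nat.card_congr (Equiv.ofBijective F hFbij), schR_def]
lemma schR_succ (k : ℕ) :
    schR (k+1) = schR k + ∑ j ∈ Finset.range (k+1), schR j * schR (k - j) := by
  classical
  have htgt : ((2*(((k+1):ℕ):ℤ), (0:ℤ)) : Pt) = (2*(k:ℤ)+2, 0) := by
    refine Prod.ext ?_ rfl
    push_cast
    ring
  have h0 : schR (k+1)
      = Nat.card {l : List Pt // IsLargePath (0,0) (2*(k:ℤ)+2, 0) l} := by
    rw [schR_def]
    congr 1
  set P : List Pt → Prop := fun l => IsLargePath (0,0) (2*(k:ℤ)+2, 0) l with hP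
  haveI : Finite {l : List Pt // P l} := isLargePath_finite _ _
  have hsum : Nat.card {l : List Pt // P l}
      = Nat.card {x : {l // P l} // x.1.head? = some ((1:ℤ),(1:ℤ))}
        + Nat.card {x : {l // P l} // ¬ (x.1.head? = some ((1:ℤ),(1:ℤ)))} := by
    rw [← Nat.card_sum,
      Nat.card_congr (Equiv.sumCompl (fun x : {l // P l} => x.1.head? = some ((1:ℤ),(1:ℤ))))]
  have e1 : Nat.card {x : {l // P l} // x.1.head? = some ((1:ℤ),(1:ℤ))}
      = Nat.card {l : List Pt // P l ∧ l.head? = some ((1:ℤ),(1:ℤ))} :=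
    Nat.card_congr (Equiv.subtypeSubtypeEquivSubtypeInter P
      (fun l => l.head? = some ((1:ℤ),(1:ℤ))))
  have e2 : Nat.card {x : {l // P l} // ¬ (x.1.head? = some ((1:ℤ),(1:ℤ)))}
      = Nat.card {l : List Pt // P l ∧ l.head? = some ((2:ℤ),(0:ℤ))} := by
    refine Nat.card_congr ?_
    refine (Equiv.subtypeSubtypeEquivSubtypeInter P
      (fun l => ¬ (l.head? = some ((1:ℤ),(1:ℤ))))).trans (Equiv.subtypeEquiv
      (Equiv.refl _) fun l => ?_)
    simp only [Equiv.refl_apply]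
    constructor
    · rintro ⟨hPl, hnU⟩
      refine ⟨hPl, ?_⟩
      rcases head_cases hPl (by positivity) with h | h
      · exact absurd h hnU
      · exact h
    · rintro ⟨hPl, hL⟩
      refine ⟨hPl, ?_⟩
      rw [hL]
      simp
  rw [h0, hsum, e1, e2, card_headU, card_headL]
  ring

lemma card_small (k : ℕ) :
    Nat.card {l : List Pt // IsSmallPath (0,0) (2*(k:ℤ)+2, 0) l}
      = ∑ j ∈ Finset.range (k+1), schR j * schS (k - j) := by
  classical
  have hbase2 : ∀ j : ℕ, (((2*(j:ℤ)+1 : ℤ), (1:ℤ)) : Pt) + (1,-1)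
      = ((0:ℤ),(0:ℤ)) + ((2*(j:ℤ)+2 : ℤ), (0:ℤ)) := by
    intro j
    refine Prod.ext ?_ ?_ <;> simp <;> ring
  -- the forward map
  have GP : ∀ (j : ℕ), j ≤ k → ∀ (Q R : List Pt),
      IsLargePath (0,0) (2*(j:ℤ), 0) Q → IsSmallPath (0,0) (2*((k:ℤ)-(j:ℤ)), 0) R →
      IsSmallPath (0,0) (2*(k:ℤ)+2, 0) (comp2 Q R) := by
    intro j hjk Q R hQ hR
    obtain ⟨hRL, hRnf⟩ := isSmall_iff.mp hR
    have c := comp2_isLarge hjk hQ hRL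
    rw [isSmall_iff]
    refine ⟨c.1, ?_⟩
    rw [noflat_comp2 c.2.1, c.2.2, hbase2 j, noflat_shift]
    exact hRnf
  let G : (Σ j : Fin (k+1), LgT (j:ℕ) × SmT (k - (j:ℕ))) →
      {l : List Pt // IsSmallPath (0,0) (2*(k:ℤ)+2, 0) l} := fun x =>
    ⟨comp2 x.2.1.1 x.2.2.1,
      GP x.1 (Nat.lt_succ_iff.mp x.1.2) _ _ x.2.1.2
        (by rw [← cast_sub_eq k x.1 (Nat.lt_succ_iff.mp x.1.2)]; exact x.2.2.2)⟩
  have hGbij : Function.Bijective G := by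
    constructor
    · rintro ⟨j₁, ⟨Q₁, hQ₁⟩, ⟨R₁, hR₁⟩⟩ ⟨j₂, ⟨Q₂, hQ₂⟩, ⟨R₂, hR₂⟩⟩ hEq
      have hjk₁ : (j₁:ℕ) ≤ k := Nat.lt_succ_iff.mp j₁.2
      have hjk₂ : (j₂:ℕ) ≤ k := Nat.lt_succ_iff.mp j₂.2
      have c₁ := comp2_isLarge hjk₁ hQ₁
        (by rw [← cast_sub_eq k j₁ hjk₁]; exact hR₁.1)
      have c₂ := comp2_isLarge hjk₂ hQ₂
        (by rw [← cast_sub_eq k j₂ hjk₂]; exact hR₂.1)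
      have hv : comp2 Q₁ R₁ = comp2 Q₂ R₂ := congrArg Subtype.val hEq
      rw [comp2, comp2] at hv
      simp only [List.cons.injEq, true_and] at hv
      obtain ⟨hQQ, hRR⟩ := decomp_unique hv c₁.2.1
        (by rw [c₁.2.2]) c₂.2.1 (by rw [c₂.2.2])
      subst hQQ
      subst hRR
      have hj : j₁ = j₂ := by
        have e1 := c₁.2.2
        have e2 := c₂.2.2
        rw [e1] at e2
        have := congrArg Prod.fst e2
        simp only [Prod.fst] at this
        have hnat : (j₁:ℕ) = (j₂:ℕ) := by omega
        exact Fin.ext hnat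
      subst hj
      rfl
    · rintro ⟨l, hl⟩
      obtain ⟨hlL, hlnf⟩ := isSmall_iff.mp hl
      have hh : l.head? = some ((1:ℤ),(1:ℤ)) := by
        rcases head_cases hlL (by positivity) with h | h
        · exact h
        · exfalso
          rcases l with _ | ⟨s, t⟩
          · simp at h
          · simp only [List.head?_cons, Option.some.injEq] at h
            subst h
            have := hlnf [] t rfl
            simp at this
      obtain ⟨j, Q, R, hjk, rfl, hQ, hR⟩ := exists_decomp hlL hh
      have c := comp2_isLarge hjk hQ hR
      have hRnf : NoFlat ((0:ℤ),(0:ℤ)) R := by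
        have h1 := (noflat_comp2 c.2.1).mp (isSmall_iff.mp hl).2
        rw [c.2.2, hbase2 j, noflat_shift] at h1
        exact h1
      refine ⟨⟨⟨j, by omega⟩, ⟨Q, hQ⟩, ⟨R, ?_⟩⟩, ?_⟩
      · rw [isSmall_iff, cast_sub_eq k j hjk]
        exact ⟨hR, hRnf⟩
      · apply Subtype.ext; rfl
  rw [← Nat.card_congr (Equiv.ofBijective G hGbij)]
  haveI : ∀ (m : ℕ), Fintype (LgT m) := fun m => Fintype.ofFinite _
  haveI : ∀ (m : ℕ), Fintype (SmT m) := fun m => Fintype.ofFinite _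
  rw [Nat.card_eq_fintype_card, Fintype.card_sigma]
  rw [Fin.sum_univ_eq_sum_range (fun j => Fintype.card (LgT j × SmT (k - j))) (k+1)]
  refine Finset.sum_congr rfl fun j hj => ?_
  rw [Fintype.card_prod, schR_def, schS_def, Nat.card_eq_fintype_card, Nat.card_eq_fintype_card]

lemma schS_succ (k : ℕ) :
    schS (k+1) = ∑ j ∈ Finset.range (k+1), schR j * schS (k - j) := by
  have htgt : ((2*(((k+1):ℕ):ℤ), (0:ℤ)) : Pt) = (2*(k:ℤ)+2, 0) := by
    refine Prod.ext ?_ rfl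
    push_cast
    ring
  rw [schS_def, ← card_small k]
  congr 1
lemma sch_eq_MM : ∀ k, schR k = MM 1 k ∧ schS k = MM 0 k := by
  intro k
  induction k using Nat.strong_induction_on with
  | _ k ih =>
    match k with
    | 0 => exact ⟨by rw [schR_zero, MM_zero], by rw [schS_zero, MM_zero]⟩
    | k+1 =>
      constructor
      · rw [schR_succ, MM1Rec, (ih k (by omega)).1]
        congr 1
        refine Finset.sum_congr rfl fun j hj => ?_
        rw [Finset.mem_range] at hj
        rw [(ih j (by omega)).1, (ih (k-j) (by omega)).1]
      · rw [schS_succ, MM0Rec]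
        refine Finset.sum_congr rfl fun j hj => ?_
        rw [Finset.mem_range] at hj
        rw [(ih j (by omega)).1, (ih (k-j) (by omega)).2]

/-- For `n ≥ 1`, `det H_n^{(0)} = det G_n^{(0)}`. -/
theorem hankel_shift_large_eq_small (n : ℕ) (hn : 1 ≤ n) :
    (Matrix.of fun i j : Fin n => (schR ((i : ℕ) + (j : ℕ)) : ℤ)).det =
      (Matrix.of fun i j : Fin n => (schS ((i : ℕ) + (j : ℕ)) : ℤ)).det := by
  have h1 : (Matrix.of fun i j : Fin n => (schR ((i : ℕ) + (j : ℕ)) : ℤ))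
      = Matrix.of fun i j : Fin n => (MM 1 ((i : ℕ) + (j : ℕ)) : ℤ) := by
    ext i j
    simp only [Matrix.of_apply, (sch_eq_MM _).1]
  have h2 : (Matrix.of fun i j : Fin n => (schS ((i : ℕ) + (j : ℕ)) : ℤ))
      = Matrix.of fun i j : Fin n => (MM 0 ((i : ℕ) + (j : ℕ)) : ℤ) := by
    ext i j
    simp only [Matrix.of_apply, (sch_eq_MM _).2]
  rw [h1, h2, det_hankel_MM n 1 (by norm_num), det_hankel_MM n 0 (by norm_num)]
  exact Finset.prod_congr rfl fun j _ => by rw [bb_diag_eq]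
end

section
/- The large Schröder numbers are the unique sequence (a_k)_{k≥0} of real numbers whose Hankel determinants satisfy det[a_{i+j-2}]_{1≤i,j≤n} = 2^{n(n-1)/2} and det[a_{i+j-1}]_{1≤i,j≤n} = 2^{n(n+1)/2} for all n ≥ 1. -/
open Matrix

namespace SchAux
open Finset Matrix

variable {R : Type*} [CommSemiring R]

/-- Convolution of sequences. -/
def conv (u v : ℕ → R) (n : ℕ) : R := ∑ i ∈ Finset.range (n+1), u i * v (n - i)

lemma conv_eq_coeff (u v : ℕ → R) (n : ℕ) :
    conv u v n = PowerSeries.coeff n (PowerSeries.mk u * PowerSeries.mk v) := by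
  rw [PowerSeries.coeff_mul, Finset.Nat.sum_antidiagonal_eq_sum_range_succ_mk]
  simp [conv]

lemma mk_conv (u v : ℕ → R) :
    PowerSeries.mk (conv u v) = PowerSeries.mk u * PowerSeries.mk v := by
  ext n; simpa [PowerSeries.coeff_mk] using conv_eq_coeff u v n

lemma conv_comm (u v : ℕ → R) (n : ℕ) : conv u v n = conv v u n := by
  rw [conv_eq_coeff, conv_eq_coeff, mul_comm]

lemma conv_assoc (u v w : ℕ → R) (n : ℕ) :
    conv (conv u v) w n = conv u (conv v w) n := by
  rw [conv_eq_coeff, conv_eq_coeff, mk_conv, mk_conv, mul_assoc]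

lemma conv_zero (u v : ℕ → R) : conv u v 0 = u 0 * v 0 := by simp [conv]

lemma conv_succ_left (u v : ℕ → R) (n : ℕ) :
    conv u v (n+1) = u 0 * v (n+1) + conv (fun s => u (s+1)) v n := by
  rw [conv, Finset.sum_range_succ']
  simp only [Nat.sub_zero, Nat.succ_sub_succ]
  rw [add_comm]
  rfl

lemma conv_succ_right (u v : ℕ → R) (n : ℕ) :
    conv u v (n+1) = u (n+1) * v 0 + conv u (fun t => v (t+1)) n := by
  rw [conv, Finset.sum_range_succ]
  rw [add_comm, Nat.sub_self]
  congr 1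
  apply Finset.sum_congr rfl
  intro i hi
  simp only [Finset.mem_range] at hi
  congr 2
  omega

lemma conv_congr {u u' v v' : ℕ → R} (hu : ∀ n, u n = u' n) (hv : ∀ n, v n = v' n) (n : ℕ) :
    conv u v n = conv u' v' n := by
  unfold conv; exact Finset.sum_congr rfl fun i _ => by rw [hu, hv]

lemma conv_add_left (u u' v : ℕ → R) (n : ℕ) :
    conv (fun s => u s + u' s) v n = conv u v n + conv u' v n := by
  unfold conv; rw [← Finset.sum_add_distrib]
  exact Finset.sum_congr rfl fun i _ => by ring

lemma conv_smul_left (a : R) (u v : ℕ → R) (n : ℕ) :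
    conv (fun s => a * u s) v n = a * conv u v n := by
  unfold conv; rw [Finset.mul_sum]
  exact Finset.sum_congr rfl fun i _ => by ring

/-- delta sequence -/
def dlt : ℕ → R := fun n => if n = 0 then 1 else 0

lemma conv_dlt_left (u : ℕ → R) (n : ℕ) : conv dlt u n = u n := by
  unfold conv dlt
  rw [Finset.sum_eq_single 0]
  · simp
  · intro i _ hi; simp [hi]
  · simp

lemma conv_dlt_right (u : ℕ → R) (n : ℕ) : conv u dlt n = u n := by
  rw [conv_comm]; exact conv_dlt_left u n

lemma conv_shift_right (u v : ℕ → R) (n : ℕ) :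
    conv u (fun t => if t = 0 then 0 else v (t-1)) n
      = if n = 0 then 0 else conv u v (n-1) := by
  cases n with
  | zero => simp [conv_zero]
  | succ m =>
    rw [conv_succ_right, if_neg (Nat.succ_ne_zero m)]
    have : (fun t => if t + 1 = 0 then (0:R) else v (t+1-1)) = fun t => v t := by
      funext t; simp
    rw [Nat.add_sub_cancel, this]
    simp

/-- The large Schröder sequence, defined by its quadratic recurrence. -/
def rS : ℕ → ℕ
  | 0 => 1
  | (n+1) => rS n + ∑ i ∈ Finset.range (n+1), rS (min i n) * rS (n - i)
  decreasing_by
  all_goals omega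

lemma rS_zero : rS 0 = 1 := by rw [rS]

lemma rS_succ (n : ℕ) : rS (n+1) = rS n + conv rS rS n := by
  rw [rS, conv]
  congr 1
  apply Finset.sum_congr rfl
  intro i hi
  rw [min_eq_left (Nat.le_of_lt_succ (Finset.mem_range.mp hi))]

def βS : ℕ → ℕ := conv rS rS

lemma rS_succ' (n : ℕ) : rS (n+1) = rS n + βS n := rS_succ n

/-- key identity: peeling the Schröder recurrence under convolution -/
lemma conv_rS_succ (g : ℕ → ℕ) (n : ℕ) :
    conv rS g (n+1) = g (n+1) + conv rS g n + conv βS g n := by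
  rw [conv_succ_left]
  have h1 : ∀ s, rS (s+1) = rS s + βS s := rS_succ'
  calc rS 0 * g (n+1) + conv (fun s => rS (s+1)) g n
      = g (n+1) + conv (fun s => rS s + βS s) g n := by
        rw [rS_zero, one_mul]
        congr 1
        exact conv_congr (fun s => h1 s) (fun _ => rfl) n
    _ = g (n+1) + (conv rS g n + conv βS g n) := by rw [conv_add_left]
    _ = _ := by ring


lemma conv_add_right (u v v' : ℕ → R) (n : ℕ) :
    conv u (fun s => v s + v' s) n = conv u v n + conv u v' n := by
  rw [conv_comm, conv_add_left, conv_comm v u, conv_comm v' u]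

lemma conv_smul_right (a : R) (u v : ℕ → R) (n : ℕ) :
    conv u (fun s => a * v s) n = a * conv u v n := by
  rw [conv_comm, conv_smul_left, conv_comm]

lemma conv_left_comm (u v w : ℕ → R) (n : ℕ) :
    conv u (conv v w) n = conv v (conv u w) n := by
  rw [conv_eq_coeff, conv_eq_coeff, mk_conv, mk_conv]
  ring_nf

lemma conv_right_comm (u v w : ℕ → R) (n : ℕ) :
    conv (conv u v) w n = conv (conv u w) v n := by
  rw [conv_eq_coeff, conv_eq_coeff, mk_conv, mk_conv]
  ring_nf

/-- convolution powers -/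
def pcs (c : ℕ → R) : ℕ → ℕ → R
  | 0 => dlt
  | (h+1) => conv c (pcs c h)

lemma pcs_apply_zero {c : ℕ → R} (hc : c 0 = 1) (h : ℕ) : pcs c h 0 = 1 := by
  induction h with
  | zero => simp [pcs, dlt]
  | succ m ih => rw [pcs, conv_zero, hc, ih, one_mul]

lemma pcs_one (c : ℕ → R) (n : ℕ) : pcs c 1 n = c n := by
  rw [pcs, show pcs c 0 = dlt from rfl, conv_dlt_right]

/-- generic: a sequence with r(0)=1 and r(s+1)=r(s)+β(s) -/
lemma conv_rec {r β : ℕ → R} (h0 : r 0 = 1) (hs : ∀ s, r (s+1) = r s + β s)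
    (g : ℕ → R) (n : ℕ) :
    conv r g (n+1) = g (n+1) + conv r g n + conv β g n := by
  rw [conv_succ_left, h0, one_mul]
  have : conv (fun s => r (s+1)) g n = conv r g n + conv β g n := by
    rw [← conv_add_left]
    exact conv_congr (fun s => hs s) (fun _ => rfl) n
  rw [this, add_assoc]

lemma conv_rec_sq {r β : ℕ → R} (h0 : r 0 = 1) (hs : ∀ s, r (s+1) = r s + β s)
    (hβ : ∀ g n, conv β g n = conv r (conv r g) n)
    (g : ℕ → R) (n : ℕ) :
    conv β g (n+1) = conv r g (n+1) + conv r (conv β g) n + conv β g n := by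
  rw [hβ g (n+1), conv_rec h0 hs (conv r g) n, ← hβ g n]
  have h2 : conv β (conv r g) n = conv r (conv β g) n := conv_left_comm β r g n
  rw [h2]
  ring

lemma βS_conv (g : ℕ → ℕ) (n : ℕ) : conv βS g n = conv rS (conv rS g) n := by
  rw [show βS = conv rS rS from rfl, conv_assoc]

lemma rS_one : rS 1 = 2 := by
  rw [show (1:ℕ) = 0 + 1 from rfl, rS_succ, conv_zero, rS_zero]
  norm_num

/-- the real-valued Schröder sequence -/
noncomputable def rR : ℕ → ℝ := fun n => (rS n : ℝ)

lemma conv_cast (u v : ℕ → ℕ) (n : ℕ) :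
    ((conv u v n : ℕ) : ℝ) = conv (fun s => (u s : ℝ)) (fun s => (v s : ℝ)) n := by
  unfold conv; push_cast; rfl

lemma rR_zero : rR 0 = 1 := by simp [rR, rS_zero]

lemma rR_one : rR 1 = 2 := by simp [rR, rS_one]

lemma rR_succ (n : ℕ) : rR (n+1) = rR n + conv rR rR n := by
  unfold rR
  rw [rS_succ]
  push_cast [conv_cast]
  rfl

noncomputable def cR : ℕ → ℝ := fun t => rR (t+1) / 2

lemma cR_zero : cR 0 = 1 := by simp [cR, rR_one]

lemma conv_rR_plus (n : ℕ) :
    conv rR rR (n+1) = rR (n+1) + conv rR (fun t => rR (t+1)) n := by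
  have := conv_succ_right rR rR n
  rw [this, rR_zero, mul_one]

/-- the scalar identity for c: c(t+1) = 3 c(t) + 2 (c*c)(t-1) -/
lemma cR_succ (t : ℕ) :
    cR (t+1) = 3 * cR t + 2 * (if t = 0 then 0 else conv cR cR (t-1)) := by
  have hcc : ∀ m, conv cR cR m = conv (fun s => rR (s+1)) (fun s => rR (s+1)) m / 4 := by
    intro m
    have : ∀ s, cR s = (1/2 : ℝ) * rR (s+1) := fun s => by rw [cR]; ring
    rw [conv_congr this this m, conv_smul_left, conv_smul_right]
    ring
  cases t with
  | zero =>
    have h2 : rR 2 = 6 := by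
      rw [show (2:ℕ) = 1 + 1 from rfl, rR_succ, conv_succ_left, conv_zero, rR_zero, rR_one]
      norm_num
    show cR 1 = 3 * cR 0 + 2 * (if (0:ℕ) = 0 then 0 else conv cR cR (0-1))
    rw [if_pos rfl, show cR 1 = rR 2 / 2 from rfl, show cR 0 = rR 1 / 2 from rfl, h2, rR_one]
    norm_num
  | succ m =>
    rw [if_neg (Nat.succ_ne_zero m), hcc, Nat.succ_sub_one]
    have e1 : rR (m+3) = rR (m+2) + conv rR rR (m+2) := rR_succ (m+2)
    have e2 : conv rR rR (m+2) = rR (m+2) + conv rR (fun t => rR (t+1)) (m+1) :=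
      conv_rR_plus (m+1)
    have e3 : conv rR (fun t => rR (t+1)) (m+1)
        = rR (m+2) * rR 0 + conv (fun t => rR (t+1)) (fun t => rR (t+1)) m := by
      have := conv_succ_right (fun t => rR (t+1)) rR m
      rw [conv_comm] at this
      rw [this]
    rw [rR_zero, mul_one] at e3
    show rR (m+3) / 2 = 3 * (rR (m+2) / 2) + _
    rw [e1, e2, e3]
    ring

/-- weighted Motzkin triangle -/
noncomputable def fM : ℕ → ℕ → ℝ
  | 0, k => if k = 0 then 1 else 0
  | (i+1), k => (if k = 0 then 0 else fM i (k-1)) + (if k = 0 then 2 else 3) * fM i k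
      + 2 * fM i (k+1)

lemma conv_rR_pcs_zero (k : ℕ) : conv rR (pcs cR k) 0 = 1 := by
  rw [conv_zero, rR_zero, pcs_apply_zero cR_zero, one_mul]

lemma rR_rec_conv (g : ℕ → ℝ) (n : ℕ) :
    conv rR g (n+1) = g (n+1) + conv rR g n + conv (conv rR rR) g n :=
  conv_rec rR_zero rR_succ g n

/-- LEM-C: right-convolution by cR satisfies the Jacobi recurrence -/
lemma conv_cR_succ (u : ℕ → ℝ) (j : ℕ) :
    conv u cR (j+1) = u (j+1) + 3 * conv u cR j
      + 2 * (if j = 0 then 0 else conv (conv u cR) cR (j-1)) := by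
  rw [conv_succ_right, cR_zero, mul_one]
  have : conv u (fun t => cR (t+1)) j
      = 3 * conv u cR j + 2 * (if j = 0 then 0 else conv u (conv cR cR) (j-1)) := by
    have h1 : conv u (fun t => cR (t+1)) j
        = conv u (fun t => 3 * cR t + 2 * (if t = 0 then 0 else conv cR cR (t-1))) j :=
      conv_congr (fun _ => rfl) (fun t => cR_succ t) j
    rw [h1, conv_add_right, conv_smul_right]
    congr 1
    have h2 : conv u (fun t => 2 * (if t = 0 then (0:ℝ) else conv cR cR (t-1))) j
        = 2 * conv u (fun t => (if t = 0 then (0:ℝ) else conv cR cR (t-1))) j :=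
      conv_smul_right 2 u _ j
    rw [h2, conv_shift_right]
  rw [this, add_assoc]
  congr 2
  rcases Nat.eq_zero_or_pos j with h | h
  · simp [h]
  · rw [if_neg (Nat.pos_iff_ne_zero.mp h), if_neg (Nat.pos_iff_ne_zero.mp h), conv_assoc]

lemma conv_rR_pcs_succ (k : ℕ) :
    conv rR (pcs cR (k+1)) = conv (conv rR (pcs cR k)) cR := by
  funext n
  rw [pcs]
  rw [conv_left_comm rR cR (pcs cR k) n]
  rw [conv_comm cR (conv rR (pcs cR k)) n]

/-- ALG1: explicit form of the Motzkin triangle -/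
lemma fM_eq (i : ℕ) : ∀ k, fM i k = if k ≤ i then conv rR (pcs cR k) (i - k) else 0 := by
  induction i with
  | zero =>
    intro k
    cases k with
    | zero => simp [fM, conv_rR_pcs_zero]
    | succ m => simp [fM]
  | succ i ih =>
    intro k
    cases k with
    | zero =>
      rw [fM]
      simp only [if_pos rfl, reduceIte, Nat.zero_le, Nat.sub_zero]
      rw [ih 0, ih 1]
      simp only [Nat.zero_le, if_pos, Nat.sub_zero]
      show (0:ℝ) + 2 * conv rR (pcs cR 0) i + 2 * (if 1 ≤ i then conv rR (pcs cR 1) (i-1) else 0)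
          = conv rR (pcs cR 0) (i+1)
      have hdlt : ∀ m, conv rR (pcs cR 0) m = rR m := fun m => conv_dlt_right rR m
      rw [hdlt, hdlt]
      cases i with
      | zero => simp [rR_zero, rR_one]
      | succ m =>
        rw [if_pos (Nat.succ_le_succ (Nat.zero_le m)), Nat.succ_sub_one]
        have h1 : ∀ n, pcs cR 1 n = cR n := pcs_one cR
        rw [conv_congr (fun _ => rfl) h1 m]
        have e1 : rR (m+2) = rR (m+1) + conv rR rR (m+1) := rR_succ (m+1)
        have e2 : conv rR rR (m+1) = rR (m+1) + conv rR (fun t => rR (t+1)) m :=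
          conv_rR_plus m
        have e3 : conv rR cR m = conv rR (fun t => rR (t+1)) m / 2 := by
          have : ∀ s, cR s = (1/2 : ℝ) * rR (s+1) := fun s => by rw [cR]; ring
          rw [conv_congr (fun _ => rfl) this m, conv_smul_right]
          ring
        rw [e3, e1, e2]
        ring
    | succ k' =>
      rw [fM]
      simp only [Nat.succ_ne_zero, if_neg, reduceIte, Nat.succ_sub_one]
      by_cases hk : k' + 1 ≤ i
      · rw [if_pos (Nat.le_succ_of_le hk)]
        have hks : k' ≤ i := by omega
        have hj : i + 1 - (k' + 1) = (i - (k'+1)) + 1 := by omega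
        set j := i - (k'+1) with hjdef
        have ek' : fM i k' = conv rR (pcs cR k') (j+1) := by
          rw [ih k', if_pos hks, show i - k' = j + 1 by omega]
        have ek1 : fM i (k'+1) = conv (conv rR (pcs cR k')) cR j := by
          rw [ih (k'+1), if_pos hk, conv_rR_pcs_succ]
        have ek2 : fM i (k'+2)
            = if j = 0 then 0 else conv (conv (conv rR (pcs cR k')) cR) cR (j-1) := by
          by_cases hj0 : j = 0
          · rw [ih (k'+2), if_neg (by omega), if_pos hj0]
          · rw [ih (k'+2), if_pos (by omega), if_neg hj0,
              show i - (k'+2) = j - 1 by omega,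
              show k' + 2 = (k'+1) + 1 from rfl, conv_rR_pcs_succ, conv_rR_pcs_succ]
        rw [ek', ek1, ek2, hj, conv_rR_pcs_succ, conv_cR_succ]
      · by_cases hk2 : k' + 1 = i + 1
        · rw [if_pos (le_of_eq hk2)]
          have hk' : k' = i := Nat.succ_injective hk2
          subst hk'
          rw [ih k', ih (k'+1), ih (k'+2)]
          rw [if_pos (le_refl k'), if_neg (by omega), if_neg (by omega)]
          rw [Nat.sub_self, show k' + 1 - (k'+1) = 0 from Nat.sub_self _]
          rw [conv_rR_pcs_zero, conv_rR_pcs_zero]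
          ring
        · rw [if_neg (by omega)]
          rw [ih k', ih (k'+1), ih (k'+2)]
          rw [if_neg (by omega), if_neg (by omega), if_neg (by omega)]
          ring

lemma fM_zero_of_gt {i k : ℕ} (h : i < k) : fM i k = 0 := by
  rw [fM_eq, if_neg (by omega)]

lemma fM_diag (i : ℕ) : fM i i = 1 := by
  rw [fM_eq, if_pos le_rfl, Nat.sub_self, conv_rR_pcs_zero]

lemma fM_apply_zero (i : ℕ) : fM i 0 = rR i := by
  rw [fM_eq, if_pos (Nat.zero_le i), Nat.sub_zero]
  exact conv_dlt_right rR i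

/-- the symmetrized expansion -/
lemma fM_exp {N i j : ℕ} (hj : j < N) :
    ∑ k ∈ range N, fM (i+1) k * 2^k * fM j k
      = (∑ k ∈ range N, (if k = 0 then 2 else 3) * 2^k * fM i k * fM j k)
        + (∑ k ∈ range N, 2^(k+1) * fM i k * fM j (k+1))
        + (∑ k ∈ range N, 2^(k+1) * fM i (k+1) * fM j k) := by
  obtain ⟨M, rfl⟩ : ∃ M, N = M + 1 := ⟨N - 1, by omega⟩
  have expand : ∀ k, fM (i+1) k * 2^k * fM j k
      = (if k = 0 then 0 else fM i (k-1)) * 2^k * fM j k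
        + ((if k = 0 then 2 else 3) * 2^k * fM i k * fM j k)
        + (2^(k+1) * fM i (k+1) * fM j k) := by
    intro k
    cases k with
    | zero => rw [fM]; norm_num; ring
    | succ m => rw [fM]; simp only [if_neg (Nat.succ_ne_zero m)]; ring
  rw [Finset.sum_congr rfl (fun k _ => expand k), Finset.sum_add_distrib,
    Finset.sum_add_distrib]
  have l1 : ∑ k ∈ range (M+1), (if k = 0 then 0 else fM i (k-1)) * 2^k * fM j k
      = ∑ k ∈ range M, fM i k * 2^(k+1) * fM j (k+1) := by
    rw [Finset.sum_range_succ' (fun k => (if k = 0 then 0 else fM i (k-1)) * 2^k * fM j k) M]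
    have e : ∀ k, (if k+1 = 0 then (0:ℝ) else fM i (k+1-1)) * 2^(k+1) * fM j (k+1)
        = fM i k * 2^(k+1) * fM j (k+1) := fun k => by simp
    rw [Finset.sum_congr rfl (fun k _ => e k)]
    simp
  have l2 : ∑ k ∈ range (M+1), 2^(k+1) * fM i k * fM j (k+1)
      = ∑ k ∈ range M, fM i k * 2^(k+1) * fM j (k+1) := by
    rw [Finset.sum_range_succ]
    rw [fM_zero_of_gt (show j < M + 1 from hj), mul_zero, add_zero]
    exact Finset.sum_congr rfl fun k _ => by ring
  rw [l1, ← l2]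
  ring

lemma fM_swap {N i j : ℕ} (hi : i < N) (hj : j < N) :
    ∑ k ∈ range N, fM (i+1) k * 2^k * fM j k
      = ∑ k ∈ range N, fM (j+1) k * 2^k * fM i k := by
  rw [fM_exp hj, fM_exp hi]
  have e1 : ∑ k ∈ range N, (if k = 0 then (2:ℝ) else 3) * 2^k * fM i k * fM j k
      = ∑ k ∈ range N, (if k = 0 then (2:ℝ) else 3) * 2^k * fM j k * fM i k :=
    Finset.sum_congr rfl fun k _ => by ring
  have e2 : ∑ k ∈ range N, (2:ℝ)^(k+1) * fM i k * fM j (k+1)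
      = ∑ k ∈ range N, (2:ℝ)^(k+1) * fM j (k+1) * fM i k :=
    Finset.sum_congr rfl fun k _ => by ring
  have e3 : ∑ k ∈ range N, (2:ℝ)^(k+1) * fM i (k+1) * fM j k
      = ∑ k ∈ range N, (2:ℝ)^(k+1) * fM j k * fM i (k+1) :=
    Finset.sum_congr rfl fun k _ => by ring
  rw [e1, e2, e3]
  ring

/-- the H0 Gram identity -/
lemma gram0 : ∀ (j i N : ℕ), i + j < N →
    ∑ k ∈ range N, fM i k * 2^k * fM j k = rR (i+j) := by
  intro j
  induction j with
  | zero =>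
    intro i N hN
    rw [Finset.sum_eq_single 0]
    · simp [fM, fM_apply_zero]
    · intro k _ hk
      have : fM 0 k = 0 := by simp [fM, hk]
      rw [this, mul_zero]
    · intro h
      exact absurd (Finset.mem_range.mpr (by omega)) h
  | succ j ihj =>
    intro i N hN
    have comm : ∑ k ∈ range N, fM i k * 2^k * fM (j+1) k
        = ∑ k ∈ range N, fM (j+1) k * 2^k * fM i k :=
      Finset.sum_congr rfl fun k _ => by ring
    rw [comm, fM_swap (by omega) (by omega), ihj (i+1) N (by omega),
      show i + 1 + j = i + (j+1) by omega]

lemma gram0' {i j n : ℕ} (hi : i < n) (hj : j < n) :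
    ∑ k ∈ range n, fM i k * 2^k * fM j k = rR (i+j) := by
  have hsub : ∑ k ∈ range n, fM i k * 2^k * fM j k
      = ∑ k ∈ range (max n (i+j+1)), fM i k * 2^k * fM j k := by
    apply Finset.sum_subset (Finset.range_subset_range.mpr (le_max_left _ _))
    intro k hk hk2
    simp only [Finset.mem_range] at hk hk2
    rw [fM_zero_of_gt (show i < k by omega), zero_mul, zero_mul]
  rw [hsub, gram0 j i _ (by omega)]

/-- the H1 Gram identity -/
lemma gram1' {i j n : ℕ} (hi : i < n) (hj : j < n) :
    ∑ k ∈ range n, (fM i k + fM i (k+1)) * 2^(k+1) * (fM j k + fM j (k+1))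
      = rR (i+j+1) := by
  -- first, reduce to ∑ fM (i+1) k 2^k fM j k over range N for large N
  have key : ∀ N, i < N → j < N →
      ∑ k ∈ range N, (fM i k + fM i (k+1)) * 2^(k+1) * (fM j k + fM j (k+1))
        = ∑ k ∈ range N, fM (i+1) k * 2^k * fM j k := by
    intro N hi' hj'
    obtain ⟨M, rfl⟩ : ∃ M, N = M + 1 := ⟨N - 1, by omega⟩
    rw [fM_exp hj']
    have hS4 : ∑ k ∈ range (M+1), 2^(k+1) * fM i (k+1) * fM j (k+1)
        = ∑ k ∈ range (M+1), (if k = 0 then 0 else (2:ℝ)^k * fM i k * fM j k) := by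
      rw [Finset.sum_range_succ (fun k => (2:ℝ)^(k+1) * fM i (k+1) * fM j (k+1)) M]
      rw [Finset.sum_range_succ' (fun k => (if k = 0 then 0 else (2:ℝ)^k * fM i k * fM j k)) M]
      rw [fM_zero_of_gt (show i < M + 1 from hi')]
      have e : ∀ k : ℕ, (if k+1 = 0 then (0:ℝ) else (2:ℝ)^(k+1) * fM i (k+1) * fM j (k+1))
          = (2:ℝ)^(k+1) * fM i (k+1) * fM j (k+1) := fun k => by simp
      rw [Finset.sum_congr rfl (fun k _ => e k)]
      norm_num
    have expand : ∀ k, (fM i k + fM i (k+1)) * 2^(k+1) * (fM j k + fM j (k+1))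
        = 2^(k+1) * fM i k * fM j k + 2^(k+1) * fM i k * fM j (k+1)
          + 2^(k+1) * fM i (k+1) * fM j k + 2^(k+1) * fM i (k+1) * fM j (k+1) := by
      intro k; ring
    rw [Finset.sum_congr rfl (fun k _ => expand k)]
    rw [Finset.sum_add_distrib, Finset.sum_add_distrib, Finset.sum_add_distrib, hS4]
    have hb : ∀ k : ℕ, (if k = 0 then (2:ℝ) else 3) * 2^k * fM i k * fM j k
        = 2^(k+1) * fM i k * fM j k + (if k = 0 then 0 else (2:ℝ)^k * fM i k * fM j k) := by
      intro k
      cases k with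
      | zero => norm_num
      | succ m =>
        rw [if_neg (Nat.succ_ne_zero m), if_neg (Nat.succ_ne_zero m)]
        ring
    rw [Finset.sum_congr rfl (fun k _ => hb k), Finset.sum_add_distrib]
    ring
  have hsub : ∑ k ∈ range n, (fM i k + fM i (k+1)) * 2^(k+1) * (fM j k + fM j (k+1))
      = ∑ k ∈ range (max n (i+j+2)), (fM i k + fM i (k+1)) * 2^(k+1) * (fM j k + fM j (k+1)) := by
    apply Finset.sum_subset (Finset.range_subset_range.mpr (le_max_left _ _))
    intro k hk hk2
    simp only [Finset.mem_range] at hk hk2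
    rw [fM_zero_of_gt (show i < k by omega), fM_zero_of_gt (show i < k + 1 by omega)]
    ring
  rw [hsub, key _ (by omega) (by omega), gram0 j (i+1) _ (by omega),
    show i + 1 + j = i + j + 1 by omega]

/-- Hankel determinant of the explicitly defined Schröder sequence, shift 0 -/
lemma hankel0_det (n : ℕ) :
    (Matrix.of fun i j : Fin n => rR ((i:ℕ) + (j:ℕ))).det = 2 ^ (n * (n-1) / 2) := by
  classical
  set F : Matrix (Fin n) (Fin n) ℝ := Matrix.of fun i k => fM (i:ℕ) (k:ℕ) with hF
  set D : Matrix (Fin n) (Fin n) ℝ := Matrix.diagonal fun k : Fin n => (2:ℝ)^(k:ℕ) with hD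
  have factor : (Matrix.of fun i j : Fin n => rR ((i:ℕ) + (j:ℕ))) = F * D * Fᵀ := by
    ext i j
    rw [Matrix.mul_apply]
    have : ∀ k : Fin n, (F * D) i k * Fᵀ k j = fM (i:ℕ) (k:ℕ) * 2^(k:ℕ) * fM (j:ℕ) (k:ℕ) := by
      intro k
      rw [Matrix.mul_diagonal]
      rfl
    rw [Finset.sum_congr rfl (fun k _ => this k)]
    rw [Fin.sum_univ_eq_sum_range (fun k => fM (i:ℕ) k * 2^k * fM (j:ℕ) k) n]
    exact (gram0' i.isLt j.isLt).symm
  rw [factor, Matrix.det_mul, Matrix.det_mul, Matrix.det_transpose]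
  have hFdet : F.det = 1 := by
    have htri : F.BlockTriangular OrderDual.toDual := by
      intro i j hij
      exact fM_zero_of_gt (show (i:ℕ) < (j:ℕ) from hij)
    rw [Matrix.det_of_lowerTriangular F htri]
    have : ∀ i : Fin n, F i i = 1 := fun i => fM_diag (i:ℕ)
    rw [Finset.prod_congr rfl (fun i _ => this i), Finset.prod_const_one]
  rw [hFdet, one_mul, mul_one, hD, Matrix.det_diagonal]
  rw [Finset.prod_pow_eq_pow_sum]
  congr 1
  rw [Fin.sum_univ_eq_sum_range (fun k => k) n, Finset.sum_range_id]

/-- Hankel determinant, shift 1 -/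
lemma hankel1_det (n : ℕ) :
    (Matrix.of fun i j : Fin n => rR ((i:ℕ) + (j:ℕ) + 1)).det = 2 ^ (n * (n+1) / 2) := by
  classical
  set G : Matrix (Fin n) (Fin n) ℝ :=
    Matrix.of fun i k => fM (i:ℕ) (k:ℕ) + fM (i:ℕ) ((k:ℕ)+1) with hG
  set D : Matrix (Fin n) (Fin n) ℝ := Matrix.diagonal fun k : Fin n => (2:ℝ)^((k:ℕ)+1) with hD
  have factor : (Matrix.of fun i j : Fin n => rR ((i:ℕ) + (j:ℕ) + 1)) = G * D * Gᵀ := by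
    ext i j
    rw [Matrix.mul_apply]
    have : ∀ k : Fin n, (G * D) i k * Gᵀ k j
        = (fM (i:ℕ) (k:ℕ) + fM (i:ℕ) ((k:ℕ)+1)) * 2^((k:ℕ)+1)
          * (fM (j:ℕ) (k:ℕ) + fM (j:ℕ) ((k:ℕ)+1)) := by
      intro k
      rw [Matrix.mul_diagonal]
      rfl
    rw [Finset.sum_congr rfl (fun k _ => this k)]
    rw [Fin.sum_univ_eq_sum_range
      (fun k => (fM (i:ℕ) k + fM (i:ℕ) (k+1)) * 2^(k+1) * (fM (j:ℕ) k + fM (j:ℕ) (k+1))) n]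
    exact (gram1' i.isLt j.isLt).symm
  rw [factor, Matrix.det_mul, Matrix.det_mul, Matrix.det_transpose]
  have hGdet : G.det = 1 := by
    have htri : G.BlockTriangular OrderDual.toDual := by
      intro i j hij
      have hij' : (i:ℕ) < (j:ℕ) := hij
      have h1 : fM (i:ℕ) (j:ℕ) = 0 := fM_zero_of_gt hij'
      have h2 : fM (i:ℕ) ((j:ℕ)+1) = 0 := fM_zero_of_gt (Nat.lt_succ_of_lt hij')
      show fM (i:ℕ) (j:ℕ) + fM (i:ℕ) ((j:ℕ)+1) = 0
      rw [h1, h2, add_zero]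
    rw [Matrix.det_of_lowerTriangular G htri]
    have : ∀ i : Fin n, G i i = 1 := by
      intro i
      show fM (i:ℕ) (i:ℕ) + fM (i:ℕ) ((i:ℕ)+1) = 1
      rw [fM_diag, fM_zero_of_gt (Nat.lt_succ_self _), add_zero]
    rw [Finset.prod_congr rfl (fun i _ => this i), Finset.prod_const_one]
  rw [hGdet, one_mul, mul_one, hD, Matrix.det_diagonal]
  rw [Finset.prod_pow_eq_pow_sum]
  congr 1
  rw [Fin.sum_univ_eq_sum_range (fun k => k + 1) n]
  have h1 : ∑ i ∈ range n, (i+1) = ∑ i ∈ range (n+1), i := by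
    rw [Finset.sum_range_succ' (fun k => k) n]
    simp
  rw [h1, Finset.sum_range_id, Nat.add_sub_cancel, Nat.mul_comm]

end SchAux

namespace SchAux

lemma endpt_append (p : Pt) (l : List Pt) (s : Pt) :
    endpt p (l ++ [s]) = endpt p l + s := by
  unfold endpt
  rw [List.foldl_append]
  rfl

lemma pts_append (p : Pt) (l : List Pt) (s : Pt) :
    pts p (l ++ [s]) = pts p l ++ [endpt p l + s] := by
  unfold pts endpt
  induction l generalizing p with
  | nil => rfl
  | cons a l ih =>
    rw [List.cons_append, List.scanl_cons, List.scanl_cons, List.foldl_cons]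
    rw [ih (p+a)]
    rfl

lemma endpt_mem_pts (p : Pt) (l : List Pt) : endpt p l ∈ pts p l := by
  induction l generalizing p with
  | nil => exact List.mem_singleton.mpr rfl
  | cons a l ih =>
    rw [show endpt p (a :: l) = endpt (p+a) l from rfl, pts, List.scanl_cons]
    exact List.mem_cons_of_mem p (ih (p+a))

lemma self_mem_pts (p : Pt) (l : List Pt) : p ∈ pts p l := by
  cases l with
  | nil => exact List.mem_singleton.mpr rfl
  | cons a l => rw [pts, List.scanl_cons]; exact List.mem_cons_self

lemma endpt_eq_sum (p : Pt) (l : List Pt) : endpt p l = p + l.sum := by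
  induction l generalizing p with
  | nil => show p = p + 0; rw [add_zero]
  | cons a l ih =>
    show endpt (p+a) l = p + (a :: l).sum
    rw [ih (p+a), List.sum_cons]
    ring

lemma len_le_sum_fst (l : List Pt)
    (hs : ∀ s ∈ l, s = ((1:ℤ), (1:ℤ)) ∨ s = (1, -1) ∨ s = (2, 0)) :
    (l.length : ℤ) ≤ (l.sum).1 := by
  induction l with
  | nil => simp
  | cons a l ih =>
    have ha : a = ((1:ℤ),(1:ℤ)) ∨ a = (1,-1) ∨ a = (2,0) := hs a List.mem_cons_self
    have ihl := ih (fun s hsl => hs s (List.mem_cons_of_mem a hsl))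
    rw [List.sum_cons, List.length_cons]
    have ha1 : 1 ≤ a.1 := by rcases ha with h | h | h <;> simp [h]
    push_cast
    have : (a + l.sum).1 = a.1 + (l.sum).1 := rfl
    rw [this]
    omega

/-- basic impossibility lemmas -/
lemma path_snd_nonneg {q : Pt} {l : List Pt} (hl : IsLargePath (0,0) q l) : 0 ≤ q.2 := by
  have h := hl.2.1 _ (endpt_mem_pts (0,0) l)
  rw [hl.2.2] at h
  exact h

lemma path_len {q : Pt} {l : List Pt} (hl : IsLargePath (0,0) q l) :
    (l.length : ℤ) ≤ q.1 := by
  have h := len_le_sum_fst l hl.1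
  have h2 : q = (0,0) + l.sum := by rw [← endpt_eq_sum, hl.2.2]
  have : q.1 = (l.sum).1 := by rw [h2]; show (0 + _) = _; rw [zero_add]
  omega

lemma path_of_x_nonpos {q : Pt} {l : List Pt} (hl : IsLargePath (0,0) q l) (h : q.1 ≤ 0) :
    l = [] ∧ q = (0,0) := by
  have hlen := path_len hl
  have hl0 : l.length = 0 := by omega
  have hnil : l = [] := List.length_eq_zero_iff.mp hl0
  refine ⟨hnil, ?_⟩
  rw [← hl.2.2, hnil]
  rfl

lemma isLargePath_nil : IsLargePath (0,0) (0,0) [] := by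
  refine ⟨by simp, ?_, rfl⟩
  intro v hv
  have : v = ((0:ℤ),(0:ℤ)) := List.mem_singleton.mp hv
  simp [this]

/-- appending a step -/
lemma path_append {q s : Pt} (hs : s = ((1:ℤ),(1:ℤ)) ∨ s = (1,-1) ∨ s = (2,0))
    (hq2 : 0 ≤ q.2) {l : List Pt} (hl : IsLargePath (0,0) (q - s) l) :
    IsLargePath (0,0) q (l ++ [s]) := by
  refine ⟨?_, ?_, ?_⟩
  · intro t ht
    rcases List.mem_append.mp ht with h | h
    · exact hl.1 t h
    · rw [List.mem_singleton.mp h]; exact hs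
  · intro v hv
    rw [pts_append] at hv
    rcases List.mem_append.mp hv with h | h
    · exact hl.2.1 v h
    · rw [List.mem_singleton.mp h, hl.2.2]
      simpa using hq2
  · rw [endpt_append, hl.2.2]
    ring

/-- removing the last step -/
lemma path_drop {q s : Pt} {l : List Pt} (hl : IsLargePath (0,0) q (l ++ [s])) :
    IsLargePath (0,0) (q - s) l := by
  refine ⟨?_, ?_, ?_⟩
  · intro t ht
    exact hl.1 t (List.mem_append.mpr (Or.inl ht))
  · intro v hv
    exact hl.2.1 v (by rw [pts_append]; exact List.mem_append.mpr (Or.inl hv))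
  · have := hl.2.2
    rw [endpt_append] at this
    rw [← this]
    ring

end SchAux
namespace SchAux

abbrev PathT (q : Pt) := {l : List Pt // IsLargePath (0,0) q l}

/-- the last-step decomposition map -/
noncomputable def stepFn (q : Pt) (hq2 : 0 ≤ q.2) :
    ((PathT (q - (1,1)) ⊕ PathT (q - (1,-1))) ⊕ PathT (q - (2,0))) → PathT q
  | Sum.inl (Sum.inl ⟨l, hl⟩) => ⟨l ++ [(1,1)], path_append (Or.inl rfl) hq2 hl⟩
  | Sum.inl (Sum.inr ⟨l, hl⟩) => ⟨l ++ [(1,-1)], path_append (Or.inr (Or.inl rfl)) hq2 hl⟩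
  | Sum.inr ⟨l, hl⟩ => ⟨l ++ [(2,0)], path_append (Or.inr (Or.inr rfl)) hq2 hl⟩

lemma append_singleton_inj {l1 l2 : List Pt} {s1 s2 : Pt} (h : l1 ++ [s1] = l2 ++ [s2]) :
    l1 = l2 ∧ s1 = s2 := by
  have := List.append_inj' h rfl
  exact ⟨this.1, by simpa using this.2⟩

lemma stepFn_bij (q : Pt) (hq2 : 0 ≤ q.2) (hq : q ≠ (0,0)) :
    Function.Bijective (stepFn q hq2) := by
  constructor
  · intro x y hxy
    have hval : (stepFn q hq2 x).val = (stepFn q hq2 y).val := by rw [hxy]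
    rcases x with (⟨l1, h1⟩ | ⟨l1, h1⟩) | ⟨l1, h1⟩ <;>
      rcases y with (⟨l2, h2⟩ | ⟨l2, h2⟩) | ⟨l2, h2⟩ <;>
      simp only [stepFn] at hval <;>
      obtain ⟨hl, hs⟩ := append_singleton_inj hval
    all_goals first
      | (exact absurd hs (by decide))
      | (subst hl; rfl)
  · intro ⟨l, hl⟩
    have hnil : l ≠ [] := by
      intro h
      rw [h] at hl
      exact hq (by rw [← hl.2.2]; rfl)
    obtain ⟨L, b, rfl⟩ : ∃ L b, l = L ++ [b] := by
      rcases List.eq_nil_or_concat l with h | ⟨L, b, h⟩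
      · exact absurd h hnil
      · exact ⟨L, b, by rw [h, List.concat_eq_append]⟩
    rcases hl.1 b (List.mem_append.mpr (Or.inr (List.mem_singleton.mpr rfl))) with hb | hb | hb
    · exact ⟨Sum.inl (Sum.inl ⟨L, by rw [← hb]; exact path_drop hl⟩), by
        simp only [stepFn]; congr 1; rw [hb]⟩
    · exact ⟨Sum.inl (Sum.inr ⟨L, by rw [← hb]; exact path_drop hl⟩), by
        simp only [stepFn]; congr 1; rw [hb]⟩
    · exact ⟨Sum.inr ⟨L, by rw [← hb]; exact path_drop hl⟩, by
        simp only [stepFn]; congr 1; rw [hb]⟩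

/-- impossibility instances -/
lemma isEmpty_path_neg_y (q : Pt) (h : q.2 < 0) : IsEmpty (PathT q) := by
  constructor
  intro ⟨l, hl⟩
  exact absurd (path_snd_nonneg hl) (by omega)

lemma isEmpty_path_bad_x (q : Pt) (h : q.1 ≤ 0) (h2 : q ≠ (0,0)) : IsEmpty (PathT q) := by
  constructor
  intro ⟨l, hl⟩
  exact h2 (path_of_x_nonpos hl h).2

noncomputable instance uniquePathZero : Unique (PathT ((0:ℤ),(0:ℤ))) := by
  refine ⟨⟨⟨[], isLargePath_nil⟩⟩, ?_⟩
  intro ⟨l, hl⟩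
  have := (path_of_x_nonpos hl (by norm_num)).1
  simp [this]

lemma finite_path : ∀ (N : ℕ) (q : Pt), q.1.toNat ≤ N → Finite (PathT q) := by
  intro N
  induction N with
  | zero =>
    intro q hq
    have hx : q.1 ≤ 0 := by omega
    by_cases h0 : q = (0,0)
    · subst h0; infer_instance
    · exact @Finite.of_subsingleton _ (isEmpty_path_bad_x q hx h0).instSubsingleton
  | succ N ih =>
    intro q hq
    by_cases hle : q.1.toNat ≤ N
    · exact ih q hle
    · have hx : q.1 = N + 1 := by omega
      by_cases hy : q.2 < 0
      · exact @Finite.of_subsingleton _ (isEmpty_path_neg_y q hy).instSubsingleton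
      · have hq0 : q ≠ (0,0) := by
          intro h; rw [h] at hx; simp at hx; omega
        haveI : Finite (PathT (q - (1,1))) := ih _ (by
          have : (q - (1,1)).1 = q.1 - 1 := rfl
          omega)
        haveI : Finite (PathT (q - (1,-1))) := ih _ (by
          have : (q - (1,-1)).1 = q.1 - 1 := rfl
          omega)
        haveI : Finite (PathT (q - (2,0))) := ih _ (by
          have : (q - (2,0)).1 = q.1 - 2 := rfl
          omega)
        exact Finite.of_surjective _ (stepFn_bij q (by omega) hq0).2

instance finitePathT (q : Pt) : Finite (PathT q) := finite_path q.1.toNat q le_rfl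

noncomputable def cnt (q : Pt) : ℕ := Nat.card (PathT q)

lemma cnt_rec (q : Pt) (hq2 : 0 ≤ q.2) (hq : q ≠ (0,0)) :
    cnt q = cnt (q - (1,1)) + cnt (q - (1,-1)) + cnt (q - (2,0)) := by
  unfold cnt
  rw [← Nat.card_eq_of_bijective _ (stepFn_bij q hq2 hq)]
  rw [Nat.card_sum, Nat.card_sum]

lemma cnt_neg_y (q : Pt) (h : q.2 < 0) : cnt q = 0 := by
  haveI := isEmpty_path_neg_y q h
  exact Nat.card_of_isEmpty

lemma cnt_bad_x (q : Pt) (h : q.1 ≤ 0) (h2 : q ≠ (0,0)) : cnt q = 0 := by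
  haveI := isEmpty_path_bad_x q h h2
  exact Nat.card_of_isEmpty

lemma cnt_zero : cnt ((0:ℤ), (0:ℤ)) = 1 := Nat.card_unique

end SchAux
namespace SchAux

noncomputable def Aar (i h : ℕ) : ℕ := cnt (2*(i:ℤ), 2*(h:ℤ))
noncomputable def Bar (i h : ℕ) : ℕ := cnt (2*(i:ℤ)+1, 2*(h:ℤ)+1)

lemma pair_ne (a b : ℤ) (h : 0 < a) : ((a, b) : Pt) ≠ ((0:ℤ),(0:ℤ)) := by
  intro hc
  rw [Prod.mk.injEq] at hc
  omega

lemma Aar_zero (h : ℕ) : Aar 0 h = if h = 0 then 1 else 0 := by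
  unfold Aar
  cases h with
  | zero => simpa using cnt_zero
  | succ m =>
    rw [if_neg (Nat.succ_ne_zero m)]
    apply cnt_bad_x _ (by simp) _
    intro hc
    rw [Prod.mk.injEq] at hc
    omega

lemma Aar_succ (i h : ℕ) :
    Aar (i+1) h = Aar i h + (if h = 0 then 0 else Bar i (h-1)) + Bar i h := by
  have hrec := cnt_rec (2*(i:ℤ)+2, 2*(h:ℤ)) (by show (0:ℤ) ≤ 2*(h:ℤ); positivity) (pair_ne _ _ (by omega))
  have e1 : ((2*(i:ℤ)+2, 2*(h:ℤ)) - (1,1)) = (2*(i:ℤ)+1, 2*(h:ℤ)-1) := by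
    rw [Prod.mk_sub_mk, Prod.mk.injEq]; constructor <;> ring
  have e2 : ((2*(i:ℤ)+2, 2*(h:ℤ)) - (1,-1)) = (2*(i:ℤ)+1, 2*(h:ℤ)+1) := by
    rw [Prod.mk_sub_mk, Prod.mk.injEq]; constructor <;> ring
  have e3 : ((2*(i:ℤ)+2, 2*(h:ℤ)) - (2,0)) = (2*(i:ℤ), 2*(h:ℤ)) := by
    rw [Prod.mk_sub_mk, Prod.mk.injEq]; constructor <;> ring
  rw [e1, e2, e3] at hrec
  have epair : ((2*(((i+1):ℕ):ℤ), 2*(h:ℤ)) : Pt) = ((2*(i:ℤ)+2 : ℤ), (2*(h:ℤ) : ℤ)) := by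
    rw [Prod.mk.injEq]
    exact ⟨by push_cast; ring, rfl⟩
  have lhs : Aar (i+1) h = cnt (2*(i:ℤ)+2, 2*(h:ℤ)) := by
    unfold Aar
    rw [epair]
  rw [lhs, hrec]
  cases h with
  | zero =>
    rw [if_pos rfl]
    have : cnt (2*(i:ℤ)+1, 2*((0:ℕ):ℤ)-1) = 0 := by
      apply cnt_neg_y
      simp
    rw [this]
    unfold Aar Bar
    push_cast
    ring
  | succ m =>
    rw [if_neg (Nat.succ_ne_zero m)]
    unfold Aar Bar
    have c1 : (2*(((m+1:ℕ)):ℤ)-1) = 2*((m:ℤ))+1 := by push_cast; ring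
    have c2 : ((m+1:ℕ) - 1 : ℕ) = m := rfl
    rw [c1, c2]
    push_cast
    ring_nf

lemma Bar_succ (i h : ℕ) :
    Bar i h = Aar i h + Aar i (h+1) + (if i = 0 then 0 else Bar (i-1) h) := by
  have hrec := cnt_rec (2*(i:ℤ)+1, 2*(h:ℤ)+1) (by show (0:ℤ) ≤ 2*(h:ℤ)+1; positivity) (pair_ne _ _ (by omega))
  have e1 : ((2*(i:ℤ)+1, 2*(h:ℤ)+1) - (1,1)) = (2*(i:ℤ), 2*(h:ℤ)) := by
    rw [Prod.mk_sub_mk, Prod.mk.injEq]; constructor <;> ring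
  have e2 : ((2*(i:ℤ)+1, 2*(h:ℤ)+1) - (1,-1)) = (2*(i:ℤ), 2*(h:ℤ)+2) := by
    rw [Prod.mk_sub_mk, Prod.mk.injEq]; constructor <;> ring
  have e3 : ((2*(i:ℤ)+1, 2*(h:ℤ)+1) - (2,0)) = (2*(i:ℤ)-1, 2*(h:ℤ)+1) := by
    rw [Prod.mk_sub_mk, Prod.mk.injEq]; constructor <;> ring
  rw [e1, e2, e3] at hrec
  show cnt _ = _
  rw [hrec]
  cases i with
  | zero =>
    rw [if_pos rfl]
    have : cnt (2*((0:ℕ):ℤ)-1, 2*(h:ℤ)+1) = 0 := by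
      apply cnt_bad_x
      · simp
      · intro hc
        rw [Prod.mk.injEq] at hc
        omega
    rw [this]
    unfold Aar
    push_cast
    ring
  | succ m =>
    rw [if_neg (Nat.succ_ne_zero m)]
    unfold Aar Bar
    have c1 : (2*(((m+1:ℕ)):ℤ)-1) = 2*((m:ℤ))+1 := by push_cast; ring
    have c2 : ((m+1:ℕ) - 1 : ℕ) = m := rfl
    rw [c1, c2]
    push_cast
    ring_nf

lemma βS_zero : βS 0 = 1 := by
  show conv rS rS 0 = 1
  rw [conv_zero, rS_zero, mul_one]

/-- master theorem identifying the path-count arrays -/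
theorem AB_eq : ∀ i : ℕ,
    (∀ h, Aar i h = if h ≤ i then conv rS (pcs βS h) (i-h) else 0) ∧
    (∀ h, Bar i h = if h ≤ i then pcs βS (h+1) (i-h) else 0) := by
  intro i
  induction i with
  | zero =>
    constructor
    · intro h
      rw [Aar_zero]
      cases h with
      | zero => simp [conv_zero, pcs, dlt, rS_zero]
      | succ m => simp
    · intro h
      rw [Bar_succ, Aar_zero, Aar_zero]
      cases h with
      | zero =>
        simp only [if_pos rfl, Nat.le_refl, Nat.sub_self]
        rw [pcs, conv_zero, βS_zero]
        simp [pcs, dlt]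
      | succ m => simp
  | succ i ih =>
    have hA : ∀ h, Aar (i+1) h = if h ≤ i+1 then conv rS (pcs βS h) (i+1-h) else 0 := by
      intro h
      cases h with
      | zero =>
        rw [Aar_succ, ih.1 0, ih.2 0]
        simp only [if_pos rfl, if_pos (Nat.zero_le _), Nat.sub_zero, Nat.le_refl]
        rw [show pcs βS 0 = dlt from rfl, conv_dlt_right, conv_dlt_right,
          pcs_one, rS_succ']
        simp
      | succ m =>
        rw [Aar_succ, ih.1 (m+1), ih.2 (m+1), if_neg (Nat.succ_ne_zero m),
          show (m+1)-1 = m from rfl, ih.2 m]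
        by_cases hm : m + 1 ≤ i
        · rw [if_pos hm, if_pos (by omega : m ≤ i), if_pos hm, if_pos (by omega : m+1 ≤ i+1)]
          have hj : i - m = (i - (m+1)) + 1 := by omega
          have hj2 : i + 1 - (m+1) = (i - (m+1)) + 1 := by omega
          rw [hj, hj2, conv_rS_succ]
          rw [show conv βS (pcs βS (m+1)) = pcs βS (m+2) from rfl]
          try ring
        · by_cases hm2 : m = i
          · subst hm2
            rw [if_neg (by omega), if_pos (le_refl m), if_neg (by omega),
              if_pos (by omega : m+1 ≤ m+1), Nat.sub_self, Nat.sub_self,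
              conv_zero, rS_zero, pcs_apply_zero βS_zero]
            norm_num
          · rw [if_neg (by omega), if_neg (by omega), if_neg (by omega), if_neg (by omega)]
    refine ⟨hA, ?_⟩
    intro h
    rw [Bar_succ, hA h, hA (h+1), if_neg (Nat.succ_ne_zero i),
      show (i+1)-1 = i from rfl, ih.2 h]
    by_cases hh : h ≤ i
    · rw [if_pos (by omega : h ≤ i+1), if_pos (by omega : h+1 ≤ i+1), if_pos hh,
        if_pos (by omega : h ≤ i+1)]
      have hj : i + 1 - h = (i - h) + 1 := by omega
      have hj2 : i + 1 - (h + 1) = i - h := by omega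
      rw [hj, hj2]
      rw [show pcs βS (h+1) = conv βS (pcs βS h) from rfl,
        conv_rec_sq rS_zero rS_succ' βS_conv (pcs βS h) (i-h),
        show conv rS (conv βS (pcs βS h)) = conv rS (pcs βS (h+1)) from rfl,
        show conv βS (pcs βS h) = pcs βS (h+1) from rfl]
      try ring
    · by_cases hh2 : h = i + 1
      · subst hh2
        rw [if_pos (le_refl _), if_neg (by omega), if_neg hh, if_pos (le_refl _)]
        rw [Nat.sub_self]
        rw [conv_zero, rS_zero, pcs_apply_zero βS_zero, pcs_apply_zero βS_zero]
        norm_num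
      · rw [if_neg (by omega), if_neg (by omega), if_neg hh, if_neg (by omega)]

end SchAux
namespace SchAux

lemma schR_eq_rS (k : ℕ) : schR k = rS k := by
  have epair : ((2*(k:ℤ), 2*((0:ℕ):ℤ)) : Pt) = ((2*(k:ℤ) : ℤ), (0 : ℤ)) := by
    rw [Prod.mk.injEq]
    exact ⟨rfl, by norm_num⟩
  have h1 : schR k = Aar k 0 := by
    unfold schR Aar cnt PathT
    rw [epair]
  rw [h1, (AB_eq k).1 0, if_pos (Nat.zero_le k), Nat.sub_zero,
    show pcs βS 0 = dlt from rfl, conv_dlt_right]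

lemma schR_cast (k : ℕ) : ((schR k : ℝ)) = rR k := by
  rw [schR_eq_rS]; rfl

/-- uniqueness step: two sequences with equal Hankel determinants and agreeing
below agree at the next even position -/
lemma hankel_uniq_step {n : ℕ} {A B : ℕ → ℝ}
    (hagree : ∀ m, m < n + n → A m = B m)
    (hdet : (Matrix.of fun i j : Fin (n+1) => A ((i:ℕ)+(j:ℕ))).det
          = (Matrix.of fun i j : Fin (n+1) => B ((i:ℕ)+(j:ℕ))).det)
    (hminor : (Matrix.of fun i j : Fin n => B ((i:ℕ)+(j:ℕ))).det ≠ 0) :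
    A (n + n) = B (n + n) := by
  classical
  set c : ℝ := A (n+n) - B (n+n) with hc
  set MB : Matrix (Fin (n+1)) (Fin (n+1)) ℝ :=
    Matrix.of fun i j : Fin (n+1) => B ((i:ℕ)+(j:ℕ)) with hMB
  have hlast : ((Fin.last n : Fin (n+1)) : ℕ) = n := rfl
  have hMA : (Matrix.of fun i j : Fin (n+1) => A ((i:ℕ)+(j:ℕ)))
      = MB.updateRow (Fin.last n) (MB (Fin.last n) + Pi.single (Fin.last n) c) := by
    ext i j
    rw [Matrix.updateRow_apply]
    by_cases hi : i = Fin.last n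
    · rw [if_pos hi]
      subst hi
      by_cases hj : j = Fin.last n
      · subst hj
        rw [Pi.add_apply, Pi.single_eq_same]
        show A (((Fin.last n : Fin (n+1)):ℕ) + ((Fin.last n : Fin (n+1)):ℕ))
          = B (((Fin.last n : Fin (n+1)):ℕ) + ((Fin.last n : Fin (n+1)):ℕ)) + c
        rw [hlast, hc]; ring
      · rw [Pi.add_apply, Pi.single_eq_of_ne hj, add_zero]
        show A (((Fin.last n : Fin (n+1)):ℕ) + (j:ℕ))
          = B (((Fin.last n : Fin (n+1)):ℕ) + (j:ℕ))
        have hjn : (j:ℕ) < n := Fin.lt_last_iff_ne_last.mpr hj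
        rw [hlast]
        exact hagree _ (by omega)
    · rw [if_neg hi]
      have hin : (i:ℕ) < n := Fin.lt_last_iff_ne_last.mpr hi
      have hjn : (j:ℕ) ≤ n := Fin.le_last j
      exact hagree _ (by omega)
  have hsplit : (Matrix.of fun i j : Fin (n+1) => A ((i:ℕ)+(j:ℕ))).det
      = MB.det + (MB.updateRow (Fin.last n) (Pi.single (Fin.last n) c)).det := by
    rw [hMA, Matrix.det_updateRow_add, Matrix.updateRow_eq_self]
  have hminor_eq :
      ((MB.updateRow (Fin.last n) (Pi.single (Fin.last n) c)).submatrix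
          (Fin.last n).succAbove (Fin.last n).succAbove)
        = Matrix.of fun i j : Fin n => B ((i:ℕ)+(j:ℕ)) := by
    ext i j
    rw [Matrix.submatrix_apply, Fin.succAbove_last]
    rw [Matrix.updateRow_ne (Fin.castSucc_lt_last i).ne]
    show B (((i.castSucc : Fin (n+1)):ℕ) + ((j.castSucc : Fin (n+1)):ℕ)) = B ((i:ℕ)+(j:ℕ))
    rw [Fin.coe_castSucc, Fin.coe_castSucc]
  have hexp : (MB.updateRow (Fin.last n) (Pi.single (Fin.last n) c)).det
      = c * (Matrix.of fun i j : Fin n => B ((i:ℕ)+(j:ℕ))).det := by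
    rw [Matrix.det_succ_row _ (Fin.last n)]
    rw [Finset.sum_eq_single (Fin.last n)]
    · rw [Matrix.updateRow_self, Pi.single_eq_same, hminor_eq]
      have : (-1 : ℝ)^(((Fin.last n : Fin (n+1)):ℕ) + ((Fin.last n : Fin (n+1)):ℕ)) = 1 :=
        Even.neg_one_pow ⟨n, by rw [hlast]⟩
      rw [this, one_mul]
    · intro j _ hj
      rw [Matrix.updateRow_self, Pi.single_eq_of_ne hj]
      ring
    · intro h
      exact absurd (Finset.mem_univ _) h
  have hzero : c * (Matrix.of fun i j : Fin n => B ((i:ℕ)+(j:ℕ))).det = 0 := by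
    rw [← hexp]
    have := hsplit.symm.trans hdet
    linarith
  rcases mul_eq_zero.mp hzero with h | h
  · have : A (n+n) - B (n+n) = 0 := h
    linarith
  · exact absurd h hminor

end SchAux


/-- The large Schröder numbers are the unique real sequence whose Hankel
determinants are `det [a_{i+j-2}] = 2^{n(n-1)/2}` and `det [a_{i+j-1}] = 2^{n(n+1)/2}`
for all `n ≥ 1`. -/
theorem large_schroeder_hankel_characterization (a : ℕ → ℝ) :
    (∀ n : ℕ, 1 ≤ n →
        (Matrix.of fun i j : Fin n => a ((i : ℕ) + (j : ℕ))).det = 2 ^ (n * (n - 1) / 2) ∧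
        (Matrix.of fun i j : Fin n => a ((i : ℕ) + (j : ℕ) + 1)).det = 2 ^ (n * (n + 1) / 2)) ↔
      a = fun k => (schR k : ℝ) := by
  constructor
  · intro hcond
    funext k
    rw [SchAux.schR_cast]
    induction k using Nat.strong_induction_on with
    | _ k ihk =>
      rcases Nat.even_or_odd k with ⟨n, hk⟩ | ⟨n, hk⟩
      · -- even: k = n + n
        subst hk
        apply SchAux.hankel_uniq_step (A := a) (B := SchAux.rR)
        · intro m hm
          exact ihk m (by omega)
        · rw [(hcond (n+1) (by omega)).1, SchAux.hankel0_det (n+1)]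
        · rw [SchAux.hankel0_det n]
          positivity
      · -- odd: k = 2n+1
        subst hk
        have : 2 * n + 1 = (n + n) + 1 := by ring
        rw [this]
        apply SchAux.hankel_uniq_step (A := fun m => a (m+1)) (B := fun m => SchAux.rR (m+1))
        · intro m hm
          exact ihk (m+1) (by omega)
        · rw [(hcond (n+1) (by omega)).2]
          have hr := SchAux.hankel1_det (n+1)
          rw [← hr]
        · have hr := SchAux.hankel1_det n
          rw [hr]
          positivity
  · rintro rfl
    intro n _
    have hs : ∀ k : ℕ, ((schR k : ℝ)) = SchAux.rR k := SchAux.schR_cast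
    constructor
    · have := SchAux.hankel0_det n
      simpa [hs] using this
    · have := SchAux.hankel1_det n
      simpa [hs] using this
end
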